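/- arXiv:1610.06816 — 6 statements merged into one kernel-verified Lean document; each statement's English description precedes it below -/
import Mathlib

section
/- Fix a partition λ and a real number q > 1. Then the limit as n → ∞ of q^{-(n²-n)} · Σ_{μ a partition of n} N_A(n,q,μ) · binom(μ,λ) exists and equals (1/z_λ) · ∏_{r≥1} (q^r/(q^r-1))^{n_r(λ)}. (For q a prime power this is the stable mean of the polynomial statistic (X choose λ) over the q^{n²-n} F-stable maximal tori of GL_n over the algebraic closure of F_q.) -/
open Finset Filter

/-- `z_μ = ∏_{r≥1} n_r(μ)! · r^{n_r(μ)}`, where `n_r(μ)` is the number of parts of `μ`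
equal to `r`.  Here a partition is encoded by its multiset of parts. -/
def zOf (mu : Multiset ℕ) : ℕ :=
  ∏ r ∈ mu.toFinset, Nat.factorial (mu.count r) * r ^ (mu.count r)

/-- `binom(ν,μ) = ∏_{r≥1} C(n_r(ν), n_r(μ))`, the value of the character polynomial
`(X choose μ)` on a permutation of cycle type `ν`. -/
def binomOf (nu mu : Multiset ℕ) : ℕ :=
  ∏ r ∈ mu.toFinset, Nat.choose (nu.count r) (mu.count r)

/-- `|GL_n(F_q)| = q^{n(n-1)/2} ∏_{i=1}^n (q^i - 1)`, for a real parameter `q`. -/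
noncomputable def GLcard (q : ℝ) (n : ℕ) : ℝ :=
  q ^ (n * (n - 1) / 2) * ∏ i ∈ Finset.Icc 1 n, (q ^ i - 1)

/-- `N_A(n,q,μ) = |GL_n(F_q)| / (z_μ ∏_{r≥1} (q^r-1)^{n_r(μ)})`, the Springer–Steinberg
count of F-stable maximal tori of `GL_n` of type `μ`, taken as a definition for real `q`. -/
noncomputable def NA (q : ℝ) (n : ℕ) (mu : Nat.Partition n) : ℝ :=
  GLcard q n /
    ((zOf mu.parts : ℝ) * ∏ r ∈ mu.parts.toFinset, (q ^ r - 1) ^ (mu.parts.count r))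

noncomputable def gfun (q : ℝ) (r k : ℕ) : ℝ :=
  (Nat.factorial k : ℝ) * (r : ℝ) ^ k * (q ^ r - 1) ^ k

noncomputable def Wt (q : ℝ) (mu : Multiset ℕ) : ℝ :=
  (∏ r ∈ mu.toFinset, gfun q r (mu.count r))⁻¹

noncomputable def Tq (q : ℝ) (m : ℕ) : ℝ := ∑ mu : Nat.Partition m, Wt q mu.parts

noncomputable def cq (q : ℝ) (m : ℕ) : ℝ := q ^ (m * (m - 1) / 2) / ∏ i ∈ Icc 1 m, (q ^ i - 1)

lemma gfun_zero (q : ℝ) (r : ℕ) : gfun q r 0 = 1 := by simp [gfun]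

lemma qpow_sub_one_pos {q : ℝ} (hq : 1 < q) {r : ℕ} (hr : 1 ≤ r) : 0 < q ^ r - 1 := by
  have := one_lt_pow₀ hq (by omega : r ≠ 0)
  linarith

lemma gfun_pos {q : ℝ} (hq : 1 < q) {r : ℕ} (hr : 1 ≤ r) (k : ℕ) : 0 < gfun q r k := by
  have h1 : (0:ℝ) < Nat.factorial k := by positivity
  have h2 : (0:ℝ) < (r:ℝ) ^ k := by positivity
  have h3 : (0:ℝ) < (q ^ r - 1) ^ k := pow_pos (qpow_sub_one_pos hq hr) k
  unfold gfun
  exact mul_pos (mul_pos h1 h2) h3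

lemma Wt_eq_subset (q : ℝ) (mu : Multiset ℕ) (s : Finset ℕ) (h : mu.toFinset ⊆ s) :
    Wt q mu = (∏ r ∈ s, gfun q r (mu.count r))⁻¹ := by
  unfold Wt
  congr 1
  apply Finset.prod_subset h
  intro r _ hr
  rw [Multiset.count_eq_zero.2 (fun hx => hr (Multiset.mem_toFinset.2 hx)), gfun_zero]

lemma NA_eq (q : ℝ) (n : ℕ) (mu : Nat.Partition n) :
    NA q n mu = GLcard q n * Wt q mu.parts := by
  unfold NA Wt
  rw [div_eq_mul_inv]
  congr 1
  congr 1
  unfold zOf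
  push_cast
  rw [← Finset.prod_mul_distrib]
  apply Finset.prod_congr rfl
  intro r _
  simp [gfun]

lemma gfun_mul {q : ℝ} {r : ℕ} {m a : ℕ} (h : m ≤ a) :
    (Nat.choose a m : ℝ) * (gfun q r m * gfun q r (a - m)) = gfun q r a := by
  unfold gfun
  have h1 : (r:ℝ)^m * (r:ℝ)^(a-m) = (r:ℝ)^a := by rw [← pow_add]; congr 1; omega
  have h2 : (q^r-1)^m * (q^r-1)^(a-m) = (q^r-1)^a := by rw [← pow_add]; congr 1; omega
  have h3 : ((a.choose m : ℝ)) * (Nat.factorial m : ℝ) * (Nat.factorial (a-m) : ℝ)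
      = (Nat.factorial a : ℝ) := by
    exact_mod_cast congrArg (Nat.cast (R := ℝ)) (Nat.choose_mul_factorial_mul_factorial h)
  calc (a.choose m : ℝ) * (((Nat.factorial m:ℝ) * (r:ℝ)^m * (q^r-1)^m) *
        ((Nat.factorial (a-m):ℝ) * (r:ℝ)^(a-m) * (q^r-1)^(a-m)))
      = ((a.choose m:ℝ) * (Nat.factorial m:ℝ) * (Nat.factorial (a-m):ℝ)) *
        ((r:ℝ)^m * (r:ℝ)^(a-m)) * ((q^r-1)^m * (q^r-1)^(a-m)) := by ring
    _ = _ := by rw [h1, h2, h3]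

lemma gfun_step {q : ℝ} {r a : ℕ} (ha : 1 ≤ a) :
    gfun q r a = (r:ℝ) * (a:ℝ) * (q^r - 1) * gfun q r (a - 1) := by
  unfold gfun
  obtain ⟨b, rfl⟩ : ∃ b, a = b + 1 := ⟨a - 1, by omega⟩
  simp only [Nat.add_sub_cancel, Nat.factorial_succ, pow_succ]
  push_cast
  ring

lemma prod_gfun_pos {q : ℝ} (hq : 1 < q) {s : Finset ℕ} (hs : ∀ r ∈ s, 1 ≤ r) (f : ℕ → ℕ) :
    0 < ∏ r ∈ s, gfun q r (f r) :=
  Finset.prod_pos fun r hr => gfun_pos hq (hs r hr) (f r)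

lemma binomOf_eq_zero {lamp mup : Multiset ℕ} (h : ¬ lamp ≤ mup) : binomOf mup lamp = 0 := by
  rw [Multiset.le_iff_count] at h
  push_neg at h
  obtain ⟨r, hr⟩ := h
  have hrmem : r ∈ lamp.toFinset := Multiset.mem_toFinset.2 (Multiset.count_pos.1 (by omega))
  exact Finset.prod_eq_zero hrmem (Nat.choose_eq_zero_of_lt hr)

set_option maxHeartbeats 1000000 in
lemma binom_Wt_eq {q : ℝ} (hq : 1 < q) {lamp mup : Multiset ℕ}
    (hlp : ∀ x ∈ lamp, 0 < x) (hmp : ∀ x ∈ mup, 0 < x) (hle : lamp ≤ mup) :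
    (binomOf mup lamp : ℝ) * Wt q mup = Wt q lamp * Wt q (mup - lamp) := by
  set s := mup.toFinset ∪ lamp.toFinset with hs
  have hpos : ∀ r ∈ s, 1 ≤ r := by
    intro r hr
    rcases Finset.mem_union.1 hr with h | h
    · exact hmp r (Multiset.mem_toFinset.1 h)
    · exact hlp r (Multiset.mem_toFinset.1 h)
  have hsubm : mup.toFinset ⊆ s := Finset.subset_union_left
  have hsubl : lamp.toFinset ⊆ s := Finset.subset_union_right
  have hsubd : (mup - lamp).toFinset ⊆ s := by
    intro x hx
    exact hsubm (Multiset.mem_toFinset.2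
      (Multiset.mem_of_le (tsub_le_self) (Multiset.mem_toFinset.1 hx)))
  have hbin : (binomOf mup lamp : ℝ) = ∏ r ∈ s, ((mup.count r).choose (lamp.count r) : ℝ) := by
    unfold binomOf
    push_cast
    apply Finset.prod_subset hsubl
    intro r _ hr
    rw [Multiset.count_eq_zero.2 (fun hx => hr (Multiset.mem_toFinset.2 hx))]
    simp
  have key : ∏ r ∈ s, gfun q r (mup.count r)
      = (∏ r ∈ s, ((mup.count r).choose (lamp.count r) : ℝ)) *
        ((∏ r ∈ s, gfun q r (lamp.count r)) * ∏ r ∈ s, gfun q r ((mup - lamp).count r)) := by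
    rw [← Finset.prod_mul_distrib, ← Finset.prod_mul_distrib]
    apply Finset.prod_congr rfl
    intro r _
    rw [Multiset.count_sub]
    exact (gfun_mul (Multiset.le_iff_count.1 hle r)).symm
  rw [Wt_eq_subset q mup s hsubm, Wt_eq_subset q lamp s hsubl, Wt_eq_subset q (mup - lamp) s hsubd,
    hbin, key]
  have hA : (∏ r ∈ s, ((mup.count r).choose (lamp.count r) : ℝ)) ≠ 0 := by
    apply Finset.prod_ne_zero_iff.2
    intro r _
    have := Nat.choose_pos (Multiset.le_iff_count.1 hle r)
    positivity
  have hB := (prod_gfun_pos hq hpos (fun r => lamp.count r)).ne'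
  have hC := (prod_gfun_pos hq hpos (fun r => (mup - lamp).count r)).ne'
  rw [mul_inv, mul_inv, ← mul_assoc, mul_inv_cancel₀ hA, one_mul]

lemma sum_binom_Wt {q : ℝ} (hq : 1 < q) {L : ℕ} (lam : Nat.Partition L) (n : ℕ) (hn : L ≤ n) :
    ∑ mu : Nat.Partition n, (binomOf mu.parts lam.parts : ℝ) * Wt q mu.parts
      = Wt q lam.parts * Tq q (n - L) := by
  classical
  rw [Tq, Finset.mul_sum]
  have hstep : ∑ mu : Nat.Partition n, (binomOf mu.parts lam.parts : ℝ) * Wt q mu.parts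
      = ∑ mu ∈ Finset.univ.filter (fun mu : Nat.Partition n => lam.parts ≤ mu.parts),
          (binomOf mu.parts lam.parts : ℝ) * Wt q mu.parts := by
    symm
    apply Finset.sum_filter_of_ne
    intro mu _ hne
    by_contra h
    rw [binomOf_eq_zero h] at hne
    simp at hne
  rw [hstep]
  refine Finset.sum_bij'
    (fun (mu : Nat.Partition n) (hmu : mu ∈ Finset.univ.filter
        fun mu : Nat.Partition n => lam.parts ≤ mu.parts) =>
      (⟨mu.parts - lam.parts,
        fun hi => mu.parts_pos (Multiset.mem_of_le tsub_le_self hi),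
        by
          have hle : lam.parts ≤ mu.parts := (Finset.mem_filter.1 hmu).2
          have h2 := congrArg Multiset.sum (tsub_add_cancel_of_le hle)
          rw [Multiset.sum_add, lam.parts_sum, mu.parts_sum] at h2
          omega⟩ : Nat.Partition (n - L)))
    (fun (nu : Nat.Partition (n - L)) _ =>
      (⟨nu.parts + lam.parts,
        fun hi => by
          rcases Multiset.mem_add.1 hi with h | h
          · exact nu.parts_pos h
          · exact lam.parts_pos h,
        by rw [Multiset.sum_add, nu.parts_sum, lam.parts_sum]; omega⟩ : Nat.Partition n))
    ?_ ?_ ?_ ?_ ?_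
  · intro mu hmu
    exact Finset.mem_univ _
  · intro nu _
    exact Finset.mem_filter.2 ⟨Finset.mem_univ _, Multiset.le_add_left _ _⟩
  · intro mu hmu
    exact Nat.Partition.ext (tsub_add_cancel_of_le (Finset.mem_filter.1 hmu).2)
  · intro nu _
    exact Nat.Partition.ext (by simp)
  · intro mu hmu
    exact binom_Wt_eq hq (fun x hx => lam.parts_pos hx) (fun x hx => mu.parts_pos hx)
      (Finset.mem_filter.1 hmu).2

lemma msum_eq (s : Multiset ℕ) : s.sum = ∑ a ∈ s.toFinset, s.count a * a := by
  conv_lhs => rw [← Multiset.toFinset_sum_count_nsmul_eq s]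
  rw [Multiset.sum_sum]
  simp [Multiset.sum_nsmul]

lemma sum_count_mul {m : ℕ} (mu : Nat.Partition m) :
    ∑ r ∈ Icc 1 m, mu.parts.count r * r = m := by
  have h1 : mu.parts.toFinset ⊆ Icc 1 m := by
    intro a ha
    rw [Multiset.mem_toFinset] at ha
    exact Finset.mem_Icc.2 ⟨mu.parts_pos ha,
      mu.parts_sum ▸ Multiset.single_le_sum (fun _ _ => Nat.zero_le _) a ha⟩
  rw [← Finset.sum_subset h1 (fun x _ hx => by
    rw [Multiset.count_eq_zero.2 (fun h => hx (Multiset.mem_toFinset.2 h)), zero_mul])]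
  rw [← msum_eq, mu.parts_sum]

set_option maxHeartbeats 1000000 in
lemma Wt_erase {q : ℝ} (hq : 1 < q) {mup : Multiset ℕ} (hmp : ∀ x ∈ mup, 0 < x)
    {r : ℕ} (hr : r ∈ mup) :
    ((mup.count r : ℝ) * r) * Wt q mup = (q ^ r - 1)⁻¹ * Wt q (mup.erase r) := by
  classical
  have hr1 : 1 ≤ r := hmp r hr
  have hrs : r ∈ mup.toFinset := Multiset.mem_toFinset.2 hr
  have hsubd : (mup.erase r).toFinset ⊆ mup.toFinset := fun x hx =>
    Multiset.mem_toFinset.2 (Multiset.mem_of_mem_erase (Multiset.mem_toFinset.1 hx))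
  have ha : 1 ≤ mup.count r := Multiset.count_pos.2 hr
  have hP : ∀ x ∈ mup.toFinset.erase r, 1 ≤ x := fun x hx =>
    hmp x (Multiset.mem_toFinset.1 (Finset.mem_of_mem_erase hx))
  rw [Wt_eq_subset q (mup.erase r) mup.toFinset hsubd]
  unfold Wt
  rw [← Finset.mul_prod_erase _ _ hrs, ← Finset.mul_prod_erase _ (fun x => gfun q x ((mup.erase r).count x)) hrs]
  have hcongr : ∏ x ∈ mup.toFinset.erase r, gfun q x ((mup.erase r).count x)
      = ∏ x ∈ mup.toFinset.erase r, gfun q x (mup.count x) := by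
    apply Finset.prod_congr rfl
    intro x hx
    rw [Multiset.count_erase_of_ne (Finset.ne_of_mem_erase hx)]
  rw [hcongr, Multiset.count_erase_self]
  rw [gfun_step ha]
  have hg := gfun_pos hq hr1 (mup.count r - 1)
  have hpr : 0 < ∏ x ∈ mup.toFinset.erase r, gfun q x (mup.count x) :=
    prod_gfun_pos hq hP _
  have hb := qpow_sub_one_pos hq hr1
  have hrpos : (0:ℝ) < (r:ℝ) := by exact_mod_cast hr1
  have hapos : (0:ℝ) < (mup.count r : ℝ) := by exact_mod_cast ha
  field_simp

set_option maxHeartbeats 1000000 in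
lemma inner_rec {q : ℝ} (hq : 1 < q) {m r : ℕ} (hr1 : 1 ≤ r) (hrm : r ≤ m) :
    ∑ mu : Nat.Partition m, ((mu.parts.count r : ℝ) * r) * Wt q mu.parts
      = (q ^ r - 1)⁻¹ * Tq q (m - r) := by
  classical
  rw [Tq, Finset.mul_sum]
  have hstep : ∑ mu : Nat.Partition m, ((mu.parts.count r : ℝ) * r) * Wt q mu.parts
      = ∑ mu ∈ Finset.univ.filter (fun mu : Nat.Partition m => r ∈ mu.parts),
          ((mu.parts.count r : ℝ) * r) * Wt q mu.parts := by
    symm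
    apply Finset.sum_filter_of_ne
    intro mu _ hne
    by_contra h
    rw [Multiset.count_eq_zero.2 h] at hne
    simp at hne
  rw [hstep]
  refine Finset.sum_bij'
    (fun (mu : Nat.Partition m) (hmu : mu ∈ Finset.univ.filter
        fun mu : Nat.Partition m => r ∈ mu.parts) =>
      (⟨mu.parts.erase r,
        fun hi => mu.parts_pos (Multiset.mem_of_mem_erase hi),
        by
          have hrmem : r ∈ mu.parts := (Finset.mem_filter.1 hmu).2
          have h2 := congrArg Multiset.sum (Multiset.cons_erase hrmem)
          rw [Multiset.sum_cons, mu.parts_sum] at h2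
          omega⟩ : Nat.Partition (m - r)))
    (fun (nu : Nat.Partition (m - r)) _ =>
      (⟨r ::ₘ nu.parts,
        fun hi => by
          rcases Multiset.mem_cons.1 hi with h | h
          · omega
          · exact nu.parts_pos h,
        by rw [Multiset.sum_cons, nu.parts_sum]; omega⟩ : Nat.Partition m))
    ?_ ?_ ?_ ?_ ?_
  · intro mu hmu
    exact Finset.mem_univ _
  · intro nu _
    exact Finset.mem_filter.2 ⟨Finset.mem_univ _, Multiset.mem_cons_self _ _⟩
  · intro mu hmu
    exact Nat.Partition.ext (Multiset.cons_erase (Finset.mem_filter.1 hmu).2)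
  · intro nu _
    exact Nat.Partition.ext (Multiset.erase_cons_head _ _)
  · intro mu hmu
    exact Wt_erase hq (fun x hx => mu.parts_pos hx) (Finset.mem_filter.1 hmu).2

lemma Tq_rec {q : ℝ} (hq : 1 < q) (m : ℕ) :
    (m : ℝ) * Tq q m = ∑ r ∈ Icc 1 m, (q ^ r - 1)⁻¹ * Tq q (m - r) := by
  have h1 : (m : ℝ) * Tq q m
      = ∑ mu : Nat.Partition m, ∑ r ∈ Icc 1 m, ((mu.parts.count r : ℝ) * r) * Wt q mu.parts := by
    rw [Tq, Finset.mul_sum]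
    apply Finset.sum_congr rfl
    intro mu _
    rw [← Finset.sum_mul]
    congr 1
    have h2 := sum_count_mul mu
    calc (m : ℝ) = ((∑ r ∈ Icc 1 m, mu.parts.count r * r : ℕ) : ℝ) := by
          exact_mod_cast (congrArg (Nat.cast (R := ℝ)) h2).symm
      _ = ∑ r ∈ Icc 1 m, (mu.parts.count r : ℝ) * r := by push_cast; rfl
  rw [h1, Finset.sum_comm]
  apply Finset.sum_congr rfl
  intro r hr
  exact inner_rec hq (Finset.mem_Icc.1 hr).1 (Finset.mem_Icc.1 hr).2

lemma prod_qpow_pos {q : ℝ} (hq : 1 < q) (m : ℕ) : 0 < ∏ i ∈ Icc 1 m, (q ^ i - 1) :=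
  Finset.prod_pos fun i hi => qpow_sub_one_pos hq (Finset.mem_Icc.1 hi).1

lemma cq_pos {q : ℝ} (hq : 1 < q) (m : ℕ) : 0 < cq q m := by
  unfold cq
  have h0 : (0:ℝ) < q := lt_trans one_pos hq
  exact div_pos (pow_pos h0 _) (prod_qpow_pos hq m)

lemma cq_zero (q : ℝ) : cq q 0 = 1 := by simp [cq]

lemma tri_succ (m : ℕ) : (m + 1) * m / 2 = m * (m - 1) / 2 + m := by
  have h2 : m * (m - 1) + 2 * m = (m + 1) * m := by cases m with
    | zero => rfl
    | succ k =>
        have h3 : k + 1 - 1 = k := rfl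
        rw [h3]; ring
  rw [← h2, Nat.add_mul_div_left _ _ (by norm_num : 0 < 2)]

lemma cq_rec {q : ℝ} (hq : 1 < q) (m : ℕ) :
    q ^ m * cq q m = (q ^ (m + 1) - 1) * cq q (m + 1) := by
  have h0 : (0:ℝ) < q := lt_trans one_pos hq
  have hprod := (prod_qpow_pos hq m).ne'
  unfold cq
  rw [Finset.prod_Icc_succ_top (by omega) (fun i => q ^ i - 1)]
  rw [show (m + 1) * ((m + 1) - 1) / 2 = m * (m - 1) / 2 + m by
    simpa using tri_succ m]
  rw [pow_add q (m * (m - 1) / 2) m]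
  have hP := (qpow_sub_one_pos hq (by omega : 1 ≤ m + 1)).ne'
  rw [mul_div_assoc', mul_div_assoc']
  rw [div_eq_div_iff hprod (mul_ne_zero hprod hP)]
  ring

lemma Qsum {q : ℝ} (hq : 1 < q) (m : ℕ) :
    ∑ k ∈ range (m + 1), cq q k = q ^ m * cq q m := by
  induction m with
  | zero => simp
  | succ m ih =>
      rw [Finset.sum_range_succ, ih, cq_rec hq m]
      ring

lemma qb_eq {q : ℝ} (hq : 1 < q) {r : ℕ} (hr : 1 ≤ r) :
    q ^ r * (q ^ r - 1)⁻¹ = 1 + (q ^ r - 1)⁻¹ := by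
  have := (qpow_sub_one_pos hq hr).ne'
  field_simp
  ring

lemma cq_step {q : ℝ} (hq : 1 < q) (k : ℕ) :
    cq q k = (q - (q⁻¹) ^ k) * cq q (k + 1) := by
  have h0 : (0:ℝ) < q := lt_trans one_pos hq
  have h := cq_rec hq k
  have hxy : (q⁻¹) ^ k * q ^ k = 1 := by
    rw [← mul_pow, inv_mul_cancel₀ h0.ne', one_pow]
  have : cq q k = (q⁻¹) ^ k * (q ^ k * cq q k) := by
    rw [← mul_assoc, hxy, one_mul]
  rw [this, h]
  have hq1 : (q⁻¹) ^ k * (q ^ (k + 1) - 1) = q - (q⁻¹) ^ k := by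
    rw [pow_succ]
    have : (q⁻¹) ^ k * (q ^ k * q) = q := by rw [← mul_assoc, hxy, one_mul]
    rw [mul_sub, this, mul_one]
  rw [← mul_assoc, hq1]

set_option maxHeartbeats 1000000 in
lemma Erec {q : ℝ} (hq : 1 < q) (m : ℕ) :
    ∑ k ∈ range m, cq q k * (q ^ (m - k) - 1)⁻¹ = (m : ℝ) * cq q m := by
  have h0 : (0:ℝ) < q := lt_trans one_pos hq
  induction m with
  | zero => simp
  | succ m ih =>
      set A : ℝ := ∑ k ∈ range m, cq q (k + 1) * (q ^ (m - k) - 1)⁻¹ with hA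
      have h1 : ∑ k ∈ range (m + 1), cq q k * (q ^ (m + 1 - k) - 1)⁻¹
          = A + cq q 0 * (q ^ (m + 1) - 1)⁻¹ := by
        rw [Finset.sum_range_succ']
        congr 1
        apply Finset.sum_congr rfl
        intro k _
        have h3 : m + 1 - (k + 1) = m - k := by omega
        rw [h3]
      have hE1 : (m : ℝ) * cq q m
          = q * A - (q⁻¹) ^ m * ((q ^ m * cq q m - 1) + A) := by
        rw [← ih]
        have hpt : ∀ k ∈ range m, cq q k * (q ^ (m - k) - 1)⁻¹
            = q * (cq q (k + 1) * (q ^ (m - k) - 1)⁻¹)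
              - (q⁻¹) ^ m * (cq q (k + 1) * (1 + (q ^ (m - k) - 1)⁻¹)) := by
          intro k hk
          have hk' : k < m := Finset.mem_range.1 hk
          have hmk : 1 ≤ m - k := by omega
          have hxk : (q⁻¹) ^ k = (q⁻¹) ^ m * q ^ (m - k) := by
            have h2 : q ^ (m - k) * q ^ k = q ^ m := by
              rw [← pow_add]; congr 1; omega
            have h3 : (q⁻¹) ^ m * q ^ m = 1 := by
              rw [← mul_pow, inv_mul_cancel₀ h0.ne', one_pow]
            have h4 : ((q⁻¹) ^ m * q ^ (m - k)) * q ^ k = 1 := by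
              rw [mul_assoc, h2, h3]
            have h5 : (q⁻¹) ^ k * q ^ k = 1 := by
              rw [← mul_pow, inv_mul_cancel₀ h0.ne', one_pow]
            have h6 : (0:ℝ) < q ^ k := pow_pos h0 k
            field_simp at h4 h5 ⊢
            nlinarith [h4, h5]
          rw [cq_step hq k]
          rw [mul_comm (q - (q⁻¹)^k) (cq q (k+1)), mul_assoc, ← qb_eq hq hmk]
          rw [hxk]
          ring
        rw [Finset.sum_congr rfl hpt, Finset.sum_sub_distrib, ← Finset.mul_sum, ← Finset.mul_sum]
        congr 2
        have h7 : ∑ k ∈ range m, cq q (k + 1) * (1 + (q ^ (m - k) - 1)⁻¹)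
            = (∑ k ∈ range m, cq q (k + 1)) + A := by
          rw [hA, ← Finset.sum_add_distrib]
          apply Finset.sum_congr rfl
          intro k _
          ring
        have h8 : ∑ k ∈ range m, cq q (k + 1) = q ^ m * cq q m - 1 := by
          have h9 := Qsum hq m
          rw [Finset.sum_range_succ'] at h9
          rw [cq_zero] at h9
          linarith
        rw [h7, h8]
      -- final algebra
      rw [h1, cq_zero, one_mul]
      have hE2 := cq_rec hq m
      have hxy : (q⁻¹) ^ m * q ^ m = 1 := by
        rw [← mul_pow, inv_mul_cancel₀ h0.ne', one_pow]
      have hP := (qpow_sub_one_pos hq (by omega : 1 ≤ m + 1)).ne'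
      have hgoal : A = ((m : ℝ) + 1) * cq q (m + 1) - (q ^ (m + 1) - 1)⁻¹ := by
        have hq1 : q - (q⁻¹) ^ m = (q⁻¹) ^ m * (q ^ (m + 1) - 1) := by
          rw [pow_succ']
          have : (q⁻¹) ^ m * (q * q ^ m) = q := by
            rw [mul_comm q (q^m), ← mul_assoc, hxy, one_mul]
          rw [mul_sub, this, mul_one]
        have hAQ : A * ((q⁻¹) ^ m * (q ^ (m + 1) - 1))
            = ((m : ℝ) + 1) * ((q⁻¹) ^ m * (q ^ (m + 1) - 1)) * cq q (m + 1) - (q⁻¹) ^ m := by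
          have hcm : cq q m = (q⁻¹) ^ m * ((q ^ (m + 1) - 1) * cq q (m + 1)) := by
            rw [← hE2, ← mul_assoc, hxy, one_mul]
          calc A * ((q⁻¹) ^ m * (q ^ (m + 1) - 1)) = A * (q - (q⁻¹) ^ m) := by rw [hq1]
            _ = (m : ℝ) * cq q m + (q⁻¹) ^ m * (q ^ m * cq q m) - (q⁻¹)^m + (q⁻¹)^m
                - (q⁻¹) ^ m := by rw [hE1]; ring
            _ = (m : ℝ) * cq q m + cq q m - (q⁻¹) ^ m := by
                rw [← mul_assoc, hxy, one_mul]; ring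
            _ = ((m : ℝ) + 1) * ((q⁻¹) ^ m * ((q ^ (m + 1) - 1) * cq q (m + 1))) - (q⁻¹) ^ m := by
                rw [← hcm]; ring
            _ = _ := by ring
        have hx0 : (q⁻¹) ^ m ≠ 0 := by positivity
        have hfinal : A * ((q⁻¹) ^ m * (q ^ (m + 1) - 1))
            = (((m : ℝ) + 1) * cq q (m + 1) - (q ^ (m + 1) - 1)⁻¹)
              * ((q⁻¹) ^ m * (q ^ (m + 1) - 1)) := by
          rw [hAQ]
          field_simp
        exact mul_right_cancel₀ (mul_ne_zero hx0 hP) hfinal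
      rw [hgoal]
      push_cast
      ring

lemma Tq_zero (q : ℝ) : Tq q 0 = 1 := by
  have h0 : ∀ mu : Nat.Partition 0, Wt q mu.parts = 1 := by
    intro mu
    have hparts : mu.parts = 0 := by
      apply Multiset.eq_zero_of_forall_notMem
      intro x hx
      have h1 := mu.parts_pos hx
      have h2 : x ≤ mu.parts.sum := Multiset.single_le_sum (fun _ _ => Nat.zero_le _) x hx
      rw [mu.parts_sum] at h2
      omega
    rw [Wt, hparts]
    simp
  rw [Tq, Finset.sum_congr rfl (fun mu _ => h0 mu), Finset.sum_const, Finset.card_univ]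
  simp

lemma Icc_reindex {q : ℝ} (M : ℕ) :
    ∑ r ∈ Icc 1 M, (q ^ r - 1)⁻¹ * cq q (M - r) = ∑ k ∈ range M, cq q k * (q ^ (M - k) - 1)⁻¹ := by
  refine Finset.sum_nbij' (fun r => M - r) (fun k => M - k) ?_ ?_ ?_ ?_ ?_
  · intro r hr
    rw [Finset.mem_Icc] at hr
    simp only [Finset.mem_range]
    omega
  · intro k hk
    rw [Finset.mem_range] at hk
    simp only [Finset.mem_Icc]
    omega
  · intro r hr
    rw [Finset.mem_Icc] at hr
    omega
  · intro k hk
    rw [Finset.mem_range] at hk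
    omega
  · intro r hr
    rw [Finset.mem_Icc] at hr
    have h1 : M - (M - r) = r := by omega
    rw [h1]
    ring

lemma Tq_eq_cq {q : ℝ} (hq : 1 < q) (m : ℕ) : Tq q m = cq q m := by
  induction m using Nat.strong_induction_on with
  | _ m ih =>
    match m with
    | 0 => rw [Tq_zero, cq_zero]
    | Nat.succ m =>
      have h1 := Tq_rec hq (m + 1)
      have h2 : ∑ r ∈ Icc 1 (m + 1), (q ^ r - 1)⁻¹ * Tq q (m + 1 - r)
          = ∑ r ∈ Icc 1 (m + 1), (q ^ r - 1)⁻¹ * cq q (m + 1 - r) := by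
        apply Finset.sum_congr rfl
        intro r hr
        rw [Finset.mem_Icc] at hr
        rw [ih (m + 1 - r) (by omega)]
      have h3 := (Icc_reindex (q := q) (m + 1)).trans (Erec hq (m + 1))
      have h4 : ((m + 1 : ℕ) : ℝ) * Tq q (m + 1) = ((m + 1 : ℕ) : ℝ) * cq q (m + 1) := by
        rw [h1, h2]
        push_cast at h3 ⊢
        rw [h3]
      exact mul_left_cancel₀ (by positivity) h4

lemma even_mul_pred (k : ℕ) : 2 * (k * (k - 1) / 2) = k * (k - 1) := by
  cases k with
  | zero => rfl
  | succ j =>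
      have h : (j + 1) * (j + 1 - 1) = j * (j + 1) := by
        have : j + 1 - 1 = j := rfl
        rw [this]; ring
      rw [h]
      rcases Nat.even_mul_succ_self j with ⟨c, hc⟩
      omega

lemma sum_range_sub_helper {L n : ℕ} (h : L ≤ n) :
    2 * (∑ j ∈ range L, (n - j)) + L * (L - 1) = 2 * n * L := by
  induction L with
  | zero => simp
  | succ k ih =>
      have hk : k ≤ n := by omega
      have ih' := ih (by omega)
      rw [Finset.sum_range_succ]
      have h1 : (k + 1) * (k + 1 - 1) = k * (k - 1) + 2 * k := by
        cases k with
        | zero => rfl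
        | succ j =>
            have e1 : j + 1 + 1 - 1 = j + 1 := rfl
            have e2 : j + 1 - 1 = j := rfl
            rw [e1, e2]; ring
      rw [h1]
      have h2 : 2 * n * (k + 1) = 2 * n * k + 2 * n := by ring
      omega

lemma exponent_identity {L n : ℕ} (h : L + 1 ≤ n) :
    n * (n - 1) / 2 + (n - L) * (n - L - 1) / 2 + (∑ j ∈ range L, (n - j))
      = L + (n ^ 2 - n) := by
  have h1 := even_mul_pred n
  have h2 := even_mul_pred (n - L)
  have h3 := sum_range_sub_helper (show L ≤ n by omega)
  have h4 : n ^ 2 - n = n * (n - 1) := by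
    cases n with
    | zero => rfl
    | succ j =>
        have e1 : j + 1 - 1 = j := rfl
        rw [e1]
        have : (j + 1) ^ 2 = (j + 1) * j + (j + 1) := by ring
        omega
  have h6 : n * (n - 1) + n = n * n := by
    cases n with
    | zero => rfl
    | succ j =>
        have e1 : j + 1 - 1 = j := rfl
        rw [e1]; ring
  have h7 : L * (L - 1) + L = L * L := by
    cases L with
    | zero => rfl
    | succ j =>
        have e1 : j + 1 - 1 = j := rfl
        rw [e1]; ring
  have h5 : (n - L) * (n - L - 1) + 2 * n * L + n = n * n + L * L + L := by
    obtain ⟨a, rfl⟩ : ∃ a, n = a + 1 + L := ⟨n - 1 - L, by omega⟩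
    have e1 : a + 1 + L - L = a + 1 := by omega
    have e2 : a + 1 - 1 = a := rfl
    rw [e1, e2]
    ring
  omega

lemma Icc_eq_Ioc (m : ℕ) : Icc 1 m = Ioc 0 m := by
  ext x
  simp [Finset.mem_Icc, Finset.mem_Ioc]
  omega

lemma prod_Ioc_reindex {q : ℝ} {L n : ℕ} (h : L ≤ n) :
    ∏ i ∈ Ioc (n - L) n, (q ^ i - 1) = ∏ j ∈ range L, (q ^ (n - j) - 1) := by
  refine Finset.prod_nbij' (fun i => n - i) (fun j => n - j) ?_ ?_ ?_ ?_ ?_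
  · intro i hi
    rw [Finset.mem_Ioc] at hi
    simp only [Finset.mem_range]
    omega
  · intro j hj
    rw [Finset.mem_range] at hj
    simp only [Finset.mem_Ioc]
    omega
  · intro i hi
    rw [Finset.mem_Ioc] at hi
    omega
  · intro j hj
    rw [Finset.mem_range] at hj
    omega
  · intro i hi
    rw [Finset.mem_Ioc] at hi
    have h1 : n - (n - i) = i := by omega
    rw [h1]

lemma core_identity {q : ℝ} (hq : 1 < q) {L n : ℕ} (hn : L + 1 ≤ n) :
    (1 / q ^ (n ^ 2 - n)) * (GLcard q n * cq q (n - L))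
      = q ^ L * ∏ j ∈ range L, (1 - (q⁻¹) ^ (n - j)) := by
  have h0 : (0:ℝ) < q := lt_trans one_pos hq
  have hsplit : ∏ i ∈ Icc 1 n, (q ^ i - 1)
      = (∏ i ∈ Icc 1 (n - L), (q ^ i - 1)) * ∏ j ∈ range L, (q ^ (n - j) - 1) := by
    rw [Icc_eq_Ioc n, Icc_eq_Ioc (n - L), ← prod_Ioc_reindex (show L ≤ n by omega),
      Finset.prod_Ioc_consecutive _ (Nat.zero_le (n - L)) (by omega : n - L ≤ n)]
  have hone : ∀ j ∈ range L, (1 : ℝ) - (q⁻¹) ^ (n - j) = (q ^ (n - j) - 1) * (q⁻¹) ^ (n - j) := by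
    intro j hj
    have hnj : (0:ℝ) < q ^ (n - j) := pow_pos h0 _
    rw [inv_pow]
    field_simp
  rw [Finset.prod_congr rfl hone, Finset.prod_mul_distrib]
  unfold GLcard cq
  rw [hsplit]
  have hprod := (prod_qpow_pos hq (n - L)).ne'
  have hprod2 : (0:ℝ) < ∏ j ∈ range L, (q ^ (n - j) - 1) :=
    Finset.prod_pos fun j hj => qpow_sub_one_pos hq (by
      rw [Finset.mem_range] at hj; omega)
  have hpows : q ^ (n * (n - 1) / 2) * q ^ ((n - L) * (n - L - 1) / 2) * q ^ (∑ j ∈ range L, (n - j))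
      = q ^ L * q ^ (n ^ 2 - n) := by
    rw [← pow_add, ← pow_add, ← pow_add]
    exact congrArg (fun e => q ^ e) (exponent_identity hn)
  have hip : ∏ j ∈ range L, (q⁻¹) ^ (n - j) = (q ^ (∑ j ∈ range L, (n - j)))⁻¹ := by
    rw [← inv_pow, Finset.prod_pow_eq_pow_sum]
  rw [hip]
  have hq1 : q ^ (n ^ 2 - n) ≠ 0 := by positivity
  have hq2 : q ^ (∑ j ∈ range L, (n - j)) ≠ 0 := by positivity
  field_simp
  nlinarith [hpows, hprod2.le, mul_pos (prod_qpow_pos hq (n-L)) hprod2]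

lemma target_eq {q : ℝ} (hq : 1 < q) {L : ℕ} (lam : Nat.Partition L) :
    (1 / (zOf lam.parts : ℝ)) *
        ∏ r ∈ lam.parts.toFinset, (q ^ r / (q ^ r - 1)) ^ (lam.parts.count r)
      = q ^ L * Wt q lam.parts := by
  have h0 : (0:ℝ) < q := lt_trans one_pos hq
  have hqL : q ^ L = ∏ r ∈ lam.parts.toFinset, (q ^ r) ^ (lam.parts.count r) := by
    have h1 : L = ∑ r ∈ lam.parts.toFinset, lam.parts.count r * r := by
      rw [← msum_eq, lam.parts_sum]
    calc q ^ L = q ^ (∑ r ∈ lam.parts.toFinset, lam.parts.count r * r) := by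
          conv_lhs => rw [h1]
      _ = _ := by
          rw [← Finset.prod_pow_eq_pow_sum]
          apply Finset.prod_congr rfl
          intro r _
          rw [← pow_mul, mul_comm]
  have hz : (zOf lam.parts : ℝ)
      = ∏ r ∈ lam.parts.toFinset, ((Nat.factorial (lam.parts.count r) : ℝ) * (r:ℝ) ^ (lam.parts.count r)) := by
    unfold zOf
    push_cast
    rfl
  rw [Wt, hz, one_div, ← Finset.prod_inv_distrib, ← Finset.prod_mul_distrib,
    hqL, ← Finset.prod_inv_distrib, ← Finset.prod_mul_distrib]
  apply Finset.prod_congr rfl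
  intro r hr
  have hr1 : 1 ≤ r := lam.parts_pos (Multiset.mem_toFinset.1 hr)
  have hfac : (0:ℝ) < (Nat.factorial (lam.parts.count r) : ℝ) := by positivity
  have hrp : (0:ℝ) < (r:ℝ) ^ (lam.parts.count r) := by
    have : (0:ℝ) < (r:ℝ) := by exact_mod_cast hr1
    positivity
  have hb := qpow_sub_one_pos hq hr1
  rw [div_pow, gfun]
  field_simp

set_option maxHeartbeats 1000000 in
lemma main_identity {q : ℝ} (hq : 1 < q) {L : ℕ} (lam : Nat.Partition L) {n : ℕ} (hn : L + 1 ≤ n) :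
    (1 / q ^ (n ^ 2 - n)) *
        ∑ mu : Nat.Partition n, NA q n mu * (binomOf mu.parts lam.parts : ℝ)
      = ((1 / (zOf lam.parts : ℝ)) *
          ∏ r ∈ lam.parts.toFinset, (q ^ r / (q ^ r - 1)) ^ (lam.parts.count r)) *
        ∏ j ∈ range L, (1 - (q⁻¹) ^ (n - j)) := by
  have hsum : ∑ mu : Nat.Partition n, NA q n mu * (binomOf mu.parts lam.parts : ℝ)
      = GLcard q n * (Wt q lam.parts * cq q (n - L)) := by
    have h1 : ∀ mu : Nat.Partition n, NA q n mu * (binomOf mu.parts lam.parts : ℝ)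
        = GLcard q n * ((binomOf mu.parts lam.parts : ℝ) * Wt q mu.parts) := by
      intro mu
      rw [NA_eq]
      ring
    rw [Finset.sum_congr rfl (fun mu _ => h1 mu), ← Finset.mul_sum,
      sum_binom_Wt hq lam n (by omega), Tq_eq_cq hq]
  rw [hsum, target_eq hq lam]
  have hc := core_identity hq (L := L) hn
  calc (1 / q ^ (n ^ 2 - n)) * (GLcard q n * (Wt q lam.parts * cq q (n - L)))
      = ((1 / q ^ (n ^ 2 - n)) * (GLcard q n * cq q (n - L))) * Wt q lam.parts := by ring
    _ = (q ^ L * ∏ j ∈ range L, (1 - (q⁻¹) ^ (n - j))) * Wt q lam.parts := by rw [hc]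
    _ = q ^ L * Wt q lam.parts * ∏ j ∈ range L, (1 - (q⁻¹) ^ (n - j)) := by ring

/-- **Theorem 1.2(i)**: the stable mean of the polynomial statistic `(X choose λ)` over the
`q^{n²-n}` F-stable maximal tori of `GL_n(\bar F_q)` is
`(1/z_λ) ∏_{r≥1} (q^r/(q^r-1))^{n_r(λ)}`. -/
theorem stable_mean_typeA (L : ℕ) (lam : Nat.Partition L) (q : ℝ) (hq : 1 < q) :
    Tendsto
      (fun n : ℕ =>
        (1 / q ^ (n ^ 2 - n)) *
          ∑ mu : Nat.Partition n, NA q n mu * (binomOf mu.parts lam.parts : ℝ))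
      atTop
      (nhds ((1 / (zOf lam.parts : ℝ)) *
        ∏ r ∈ lam.parts.toFinset, (q ^ r / (q ^ r - 1)) ^ (lam.parts.count r))) := by
  have h0 : (0:ℝ) < q := lt_trans one_pos hq
  set tgt : ℝ := (1 / (zOf lam.parts : ℝ)) *
    ∏ r ∈ lam.parts.toFinset, (q ^ r / (q ^ r - 1)) ^ (lam.parts.count r) with htgt
  have htend : Tendsto (fun n : ℕ => tgt * ∏ j ∈ range L, (1 - (q⁻¹) ^ (n - j)))
      atTop (nhds (tgt * ∏ j ∈ range L, (1:ℝ))) := by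
    apply Tendsto.const_mul
    apply tendsto_finset_prod
    intro j _
    have h1 : Tendsto (fun n : ℕ => (q⁻¹) ^ (n - j)) atTop (nhds 0) := by
      apply (tendsto_pow_atTop_nhds_zero_of_lt_one (by positivity)
        (by rw [inv_lt_one_iff₀]; right; exact hq)).comp
      exact tendsto_sub_atTop_nat j
    have h2 := (tendsto_const_nhds (x := (1:ℝ)) (f := atTop)).sub h1
    simpa using h2
  rw [Finset.prod_const_one, mul_one] at htend
  apply Tendsto.congr' _ htend
  filter_upwards [eventually_ge_atTop (L + 1)] with n hn
  exact (main_identity hq lam hn).symm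
end

section
/- For every integer n ≥ 0 and every real number q > 1, the sum over all double partitions (ν,κ) of n of N(n,q,ν,κ) = |Sp_{2n}(F_q)| / (v_ν v_κ ∏_{r≥1} (q^r-1)^{n_r(ν)} (q^r+1)^{n_r(κ)}) equals q^{2n²}. (For q a prime power this recovers Steinberg's theorem that the total number of F-stable maximal tori of Sp_{2n}(\bar F_q) is q^{2n²}.) -/
open Finset

/-- `v_μ = ∏_{r≥1} n_r(μ)! · (2r)^{n_r(μ)}`. -/
def vOf (mu : Multiset ℕ) : ℕ :=
  ∏ r ∈ mu.toFinset, Nat.factorial (mu.count r) * (2 * r) ^ (mu.count r)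

/-- `|Sp_{2n}(F_q)| = q^{n²} ∏_{i=1}^n (q^{2i} - 1)`, for a real parameter `q`. -/
noncomputable def Spcard (q : ℝ) (n : ℕ) : ℝ :=
  q ^ (n ^ 2) * ∏ i ∈ Finset.Icc 1 n, (q ^ (2 * i) - 1)

/-- `N(n,q,ν,κ) = |Sp_{2n}(F_q)| / (v_ν v_κ ∏_{r≥1} (q^r-1)^{n_r(ν)} (q^r+1)^{n_r(κ)})`. -/
noncomputable def NBC (q : ℝ) (n : ℕ) {a b : ℕ} (nu : Nat.Partition a)
    (ka : Nat.Partition b) : ℝ :=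
  Spcard q n /
    ((vOf nu.parts : ℝ) * (vOf ka.parts : ℝ) *
      (∏ r ∈ nu.parts.toFinset, (q ^ r - 1) ^ (nu.parts.count r)) *
      (∏ r ∈ ka.parts.toFinset, (q ^ r + 1) ^ (ka.parts.count r)))

namespace SteinbergBC

def ee (n m : ℕ) : ℤ := ((m : ℤ) * (m + 1)) / 2 - (n : ℤ) * m

noncomputable def PP (t : ℝ) (n m : ℕ) : ℝ :=
  t ^ ee n m * (∏ i ∈ Ioc (n - m) n, (t ^ i - 1)) / (t ^ m - 1)

noncomputable def RR (t : ℝ) (n m : ℕ) : ℝ :=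
  t ^ ee n m * ∏ i ∈ Ioc (n - m - 1) (n - 1), (t ^ i - 1)

noncomputable def QQ (t : ℝ) (n m : ℕ) : ℝ :=
  t ^ ee n m * ∏ i ∈ Ioc (n - m) (n - 1), (t ^ i - 1)

variable {t : ℝ}

lemma half_step (m : ℤ) : (m * (m + 1)) / 2 = ((m - 1) * m) / 2 + m := by
  have h : m * (m + 1) = (m - 1) * m + m * 2 := by ring
  rw [h, Int.add_mul_ediv_right _ _ two_ne_zero]

lemma ee_pred {n m : ℕ} (hm : 1 ≤ m) (hmn : m ≤ n) :
    ee n (m - 1) = ee n m + ((n - m : ℕ) : ℤ) := by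
  have c1 : ((m - 1 : ℕ) : ℤ) = (m : ℤ) - 1 := by omega
  have c2 : ((n - m : ℕ) : ℤ) = (n : ℤ) - m := by omega
  unfold ee
  have c3 : ((m:ℤ) - 1) * ((m:ℤ) - 1 + 1) = ((m:ℤ) - 1) * m := by ring
  rw [c1, c2, c3, half_step]
  ring

lemma pow_sub_ne (ht : 1 < t) {m : ℕ} (hm : 1 ≤ m) : t ^ m - 1 ≠ 0 :=
  sub_ne_zero.mpr (one_lt_pow₀ ht (by omega)).ne'

lemma tne (ht : 1 < t) : t ≠ 0 := by positivity

lemma R_sub (ht : 1 < t) {n m : ℕ} (hm : 1 ≤ m) (hmn : m ≤ n - 1) (hn : 1 ≤ n) :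
    RR t n (m - 1) - RR t n m = QQ t n m := by
  have hmn' : m + 1 ≤ n := by omega
  have h1 : n - (m - 1) - 1 = n - m := by omega
  have h2 := ee_pred hm (show m ≤ n by omega)
  have h3 : ∏ i ∈ Ioc (n - m - 1) (n - 1), (t ^ i - 1)
      = (t ^ (n - m) - 1) * ∏ i ∈ Ioc (n - m) (n - 1), (t ^ i - 1) := by
    rw [← Finset.prod_Ioc_consecutive _ (show n - m - 1 ≤ n - m by omega)
      (show n - m ≤ n - 1 by omega)]
    congr 1
    have h : Ioc (n - m - 1) (n - m) = {n - m} := by ext x; simp; omega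
    rw [h, Finset.prod_singleton]
  unfold RR QQ
  rw [h1, h2, h3, zpow_add₀ (tne ht), zpow_natCast]
  ring

lemma Q_top {n : ℕ} (hn : 1 ≤ n) : QQ t n n = RR t n (n - 1) := by
  unfold QQ RR
  have h1 : n - n = 0 := by omega
  have h2 : n - (n - 1) - 1 = 0 := by omega
  have h3 : ee n (n - 1) = ee n n := by
    have := ee_pred (n := n) (m := n) hn le_rfl
    simp at this
    omega
  rw [h1, h2, h3]

lemma RR_zero (n : ℕ) : RR t n 0 = 1 := by
  unfold RR ee
  norm_num

lemma sum_QQ (ht : 1 < t) {n : ℕ} (hn : 1 ≤ n) : ∑ m ∈ Icc 1 n, QQ t n m = 1 := by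
  obtain ⟨p, rfl⟩ : ∃ p, n = p + 1 := ⟨n - 1, by omega⟩
  have h : Icc 1 (p + 1) = Ico 1 (p + 2) := by rw [show p + 2 = p + 1 + 1 from rfl, Finset.Ico_add_one_right_eq_Icc]
  rw [h, Finset.sum_Ico_eq_sum_range]
  have h2 : p + 2 - 1 = p + 1 := by omega
  rw [h2, Finset.sum_range_succ]
  have h4 : ∑ i ∈ range p, QQ t (p + 1) (1 + i)
      = ∑ i ∈ range p, (RR t (p + 1) i - RR t (p + 1) (i + 1)) := by
    apply Finset.sum_congr rfl
    intro i hi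
    rw [Finset.mem_range] at hi
    have h5 := R_sub ht (n := p + 1) (m := i + 1) (by omega) (by omega) (by omega)
    have he : i + 1 - 1 = i := by omega
    rw [he] at h5
    rw [Nat.add_comm 1 i]
    exact h5.symm
  rw [h4, Finset.sum_range_sub', RR_zero, Nat.add_comm 1 p]
  have h6 := Q_top (t := t) (n := p + 1) (by omega)
  simp only [Nat.add_sub_cancel] at h6
  rw [h6]
  ring


lemma ee_n_pred {n m : ℕ} (hn : 1 ≤ n) : ee (n - 1) m = ee n m + (m : ℤ) := by
  unfold ee
  have c1 : ((n - 1 : ℕ) : ℤ) = (n : ℤ) - 1 := by omega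
  rw [c1]; ring

lemma P_sub (ht : 1 < t) {n m : ℕ} (hm : 1 ≤ m) (hmn : m ≤ n - 1) (hn : 1 ≤ n) :
    PP t n m - PP t (n - 1) m = QQ t n m := by
  have hmn' : m + 1 ≤ n := by omega
  have h1 : ∏ i ∈ Ioc (n - m) n, (t ^ i - 1)
      = (∏ i ∈ Ioc (n - m) (n - 1), (t ^ i - 1)) * (t ^ n - 1) := by
    rw [← Finset.prod_Ioc_consecutive _ (show n - m ≤ n - 1 by omega)
      (show n - 1 ≤ n by omega)]
    congr 1
    have h : Ioc (n - 1) n = {n} := by ext x; simp; omega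
    rw [h, Finset.prod_singleton]
  have h2 : ∏ i ∈ Ioc (n - 1 - m) (n - 1), (t ^ i - 1)
      = (t ^ (n - m) - 1) * ∏ i ∈ Ioc (n - m) (n - 1), (t ^ i - 1) := by
    rw [← Finset.prod_Ioc_consecutive _ (show n - 1 - m ≤ n - m by omega)
      (show n - m ≤ n - 1 by omega)]
    congr 1
    have h : Ioc (n - 1 - m) (n - m) = {n - m} := by ext x; simp; omega
    rw [h, Finset.prod_singleton]
  unfold PP QQ
  rw [h1, h2, ee_n_pred hn, zpow_add₀ (tne ht), zpow_natCast]
  have hne := pow_sub_ne ht hm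
  have hpow : t ^ m * t ^ (n - m) = t ^ n := by
    rw [← pow_add]; congr 1; omega
  field_simp
  linear_combination (-(∏ i ∈ Ioc (n - m) (n - 1), (t ^ i - 1))) * hpow


lemma P_top (ht : 1 < t) {n : ℕ} (hn : 1 ≤ n) : PP t n n = QQ t n n := by
  unfold PP QQ
  have h1 : ∏ i ∈ Ioc (n - n) n, (t ^ i - 1)
      = (∏ i ∈ Ioc (n - n) (n - 1), (t ^ i - 1)) * (t ^ n - 1) := by
    rw [← Finset.prod_Ioc_consecutive _ (show n - n ≤ n - 1 by omega)
      (show n - 1 ≤ n by omega)]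
    congr 1
    have h : Ioc (n - 1) n = {n} := by ext x; simp; omega
    rw [h, Finset.prod_singleton]
  rw [h1]
  have hne := pow_sub_ne ht hn
  field_simp

lemma sum_PP (ht : 1 < t) (n : ℕ) : ∑ m ∈ Icc 1 n, PP t n m = n := by
  induction n with
  | zero => simp
  | succ p ih =>
    rw [← Finset.Ico_add_one_right_eq_Icc, Finset.sum_Ico_succ_top (by omega), Finset.Ico_add_one_right_eq_Icc]
    have h1 : ∀ m ∈ Icc 1 p, PP t (p + 1) m = QQ t (p + 1) m + PP t p m := by
      intro m hm
      simp only [Finset.mem_Icc] at hm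
      have h := P_sub ht (n := p + 1) (m := m) hm.1 (by omega) (by omega)
      simp only [Nat.add_sub_cancel] at h
      linarith
    rw [Finset.sum_congr rfl h1, Finset.sum_add_distrib, ih, P_top ht (by omega)]
    have h2 := sum_QQ ht (n := p + 1) (by omega)
    rw [← Finset.Ico_add_one_right_eq_Icc, Finset.sum_Ico_succ_top (by omega), Finset.Ico_add_one_right_eq_Icc] at h2
    push_cast
    linarith

noncomputable def aa (q : ℝ) (n : ℕ) : ℝ := q ^ (n ^ 2) / ∏ i ∈ Ioc 0 n, (q ^ (2 * i) - 1)
noncomputable def cc (q : ℝ) (r : ℕ) : ℝ := q ^ r / (q ^ (2 * r) - 1)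

variable {q : ℝ}


lemma factor_pos (hq : 1 < q) {i : ℕ} (hi : 1 ≤ i) : 0 < q ^ (2 * i) - 1 := by
  have : 1 < q ^ (2 * i) := one_lt_pow₀ hq (by omega)
  linarith

lemma prod_factors_pos (hq : 1 < q) (n : ℕ) : 0 < ∏ i ∈ Ioc 0 n, (q ^ (2 * i) - 1) := by
  apply Finset.prod_pos
  intro i hi
  simp only [Finset.mem_Ioc] at hi
  exact factor_pos hq hi.1

lemma hA (hq : 1 < q) {n r : ℕ} (h1 : 1 ≤ r) (h2 : r ≤ n) :
    (q ^ 2) ^ ee n r * q ^ (n ^ 2) = q ^ r * q ^ ((n - r) ^ 2) := by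
  have hqne : q ≠ 0 := by positivity
  have e1 : ((q : ℝ) ^ 2) ^ ee n r = q ^ (2 * ee n r) := by
    rw [← zpow_natCast q 2, ← zpow_mul]
    norm_num
  rw [e1, ← zpow_natCast q (n ^ 2), ← zpow_add₀ hqne, ← zpow_natCast q r,
    ← zpow_natCast q ((n - r) ^ 2), ← zpow_add₀ hqne]
  congr 1
  have hd : 2 * ((r : ℤ) * (r + 1) / 2) = (r : ℤ) * (r + 1) :=
    Int.mul_ediv_cancel' (Int.even_mul_succ_self (r : ℤ)).two_dvd
  have c1 : ((n - r : ℕ) : ℤ) = (n : ℤ) - r := by omega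
  unfold ee
  push_cast
  rw [c1, mul_sub, hd]
  ring

lemma key_term (hq : 1 < q) {n r : ℕ} (h1 : 1 ≤ r) (h2 : r ≤ n) :
    cc q r * aa q (n - r) = PP (q ^ 2) n r * aa q n := by
  have hq0 : (0 : ℝ) < q := lt_trans one_pos hq
  have hqne : q ≠ 0 := hq0.ne'
  have ht : 1 < q ^ 2 := by nlinarith
  have hp1 : ∀ i, ((q : ℝ) ^ 2) ^ i - 1 = q ^ (2 * i) - 1 := fun i => by rw [pow_mul]
  have hsplit : ∏ i ∈ Ioc 0 n, (q ^ (2 * i) - 1)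
      = (∏ i ∈ Ioc 0 (n - r), (q ^ (2 * i) - 1)) * ∏ i ∈ Ioc (n - r) n, (q ^ (2 * i) - 1) :=
    (Finset.prod_Ioc_consecutive _ (by omega) (by omega)).symm
  have hd1 : ∏ i ∈ Ioc 0 (n - r), (q ^ (2 * i) - 1) ≠ 0 := (prod_factors_pos hq _).ne'
  have hd2 : ∏ i ∈ Ioc (n - r) n, (q ^ (2 * i) - 1) ≠ 0 := by
    apply ne_of_gt
    apply Finset.prod_pos
    intro i hi
    simp only [Finset.mem_Ioc] at hi
    exact factor_pos hq (by omega)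
  have hdr : q ^ (2 * r) - 1 ≠ 0 := (factor_pos hq h1).ne'
  have hAq := hA hq h1 h2
  unfold cc aa PP
  simp only [hp1]
  rw [hsplit]
  field_simp
  linear_combination (-1 : ℝ) * hAq

lemma aa_rec (hq : 1 < q) {n : ℕ} (hn : 1 ≤ n) :
    (n : ℝ) * aa q n = ∑ r ∈ Icc 1 n, cc q r * aa q (n - r) := by
  have hq0 : (0 : ℝ) < q := lt_trans one_pos hq
  have ht : 1 < q ^ 2 := by nlinarith
  have h1 : ∑ r ∈ Icc 1 n, cc q r * aa q (n - r)
      = ∑ r ∈ Icc 1 n, PP (q ^ 2) n r * aa q n := by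
    apply Finset.sum_congr rfl
    intro r hr
    simp only [Finset.mem_Icc] at hr
    exact key_term hq hr.1 hr.2
  rw [h1, ← Finset.sum_mul, sum_PP ht]


noncomputable def Wgt (d : ℕ → ℝ) (mu : Multiset ℕ) : ℝ :=
  ∏ r ∈ mu.toFinset,
    (((mu.count r).factorial : ℝ) * (2 * (r : ℝ)) ^ (mu.count r) * d r ^ (mu.count r))⁻¹

lemma Wgt_cons (d : ℕ → ℝ) (a : ℕ) (s : Multiset ℕ) :
    Wgt d (a ::ₘ s) = (((s.count a : ℝ) + 1) * (2 * (a : ℝ)) * d a)⁻¹ * Wgt d s := by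
  classical
  set f : ℕ → ℝ := fun r =>
    (((s.count r).factorial : ℝ) * (2 * (r : ℝ)) ^ (s.count r) * d r ^ (s.count r))⁻¹ with hf
  set f' : ℕ → ℝ := fun r =>
    ((((a ::ₘ s).count r).factorial : ℝ) * (2 * (r : ℝ)) ^ ((a ::ₘ s).count r)
      * d r ^ ((a ::ₘ s).count r))⁻¹ with hf'
  have hfactor : f' a = (((s.count a : ℝ) + 1) * (2 * (a : ℝ)) * d a)⁻¹ * f a := by
    simp only [hf, hf', Multiset.count_cons_self]
    rw [Nat.factorial_succ, pow_succ, pow_succ]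
    push_cast
    rw [show ((s.count a : ℝ) + 1) * (s.count a).factorial * ((2 * a) ^ s.count a * (2 * a))
        * (d a ^ s.count a * d a)
        = (((s.count a : ℝ) + 1) * (2 * (a : ℝ)) * d a)
          * ((s.count a).factorial * (2 * a) ^ s.count a * d a ^ s.count a) by ring, mul_inv]
  have hsame : ∀ r, r ≠ a → f' r = f r := by
    intro r hr
    simp only [hf, hf', Multiset.count_cons_of_ne hr]
  by_cases h : a ∈ s
  · have ht : (a ::ₘ s).toFinset = s.toFinset := by
      rw [Multiset.toFinset_cons, Finset.insert_eq_self.mpr (Multiset.mem_toFinset.mpr h)]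
    have hmem : a ∈ s.toFinset := Multiset.mem_toFinset.mpr h
    unfold Wgt
    rw [ht, ← Finset.mul_prod_erase _ f' hmem, ← Finset.mul_prod_erase _ f hmem, hfactor]
    rw [Finset.prod_congr rfl fun r hr => hsame r (Finset.mem_erase.mp hr).1]
    ring
  · have hc : s.count a = 0 := Multiset.count_eq_zero.mpr h
    have hmem : a ∉ s.toFinset := fun hx => h (Multiset.mem_toFinset.mp hx)
    have h1 : Wgt d (a ::ₘ s) = f' a * ∏ x ∈ s.toFinset, f' x := by
      unfold Wgt; rw [Multiset.toFinset_cons, Finset.prod_insert hmem]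
    have h2 : Wgt d s = ∏ r ∈ s.toFinset, f r := rfl
    have h3 : f a = 1 := by simp [hf, hc]
    rw [h1, h2, hfactor, h3,
      Finset.prod_congr rfl fun r hr => hsame r (fun he => hmem (he ▸ hr))]
    ring

lemma Wgt_erase (d : ℕ → ℝ) {mu : Multiset ℕ} {r : ℕ} (h : r ∈ mu) :
    Wgt d mu = ((mu.count r : ℝ) * (2 * (r : ℝ)) * d r)⁻¹ * Wgt d (mu.erase r) := by
  conv_lhs => rw [← Multiset.cons_erase h, Wgt_cons]
  congr 2
  have h1 : 1 ≤ mu.count r := Multiset.one_le_count_iff_mem.mpr h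
  rw [Multiset.count_erase_self]
  push_cast [Nat.cast_sub h1]
  ring

lemma sum_weight (d : ℕ → ℝ) (mu : Multiset ℕ) (h0 : 0 ∉ mu) :
    (mu.sum : ℝ) * Wgt d mu = ∑ r ∈ mu.toFinset, (2 * d r)⁻¹ * Wgt d (mu.erase r) := by
  have hs : (mu.sum : ℝ) = ∑ r ∈ mu.toFinset, (mu.count r : ℝ) * r := by
    have := Finset.sum_multiset_map_count mu (fun x => x)
    rw [Multiset.map_id'] at this
    rw [this]
    push_cast
    simp [smul_eq_mul]
  rw [hs, Finset.sum_mul]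
  apply Finset.sum_congr rfl
  intro r hr
  have hmem : r ∈ mu := Multiset.mem_toFinset.mp hr
  have hcount : 1 ≤ mu.count r := Multiset.one_le_count_iff_mem.mpr hmem
  have hcne : (mu.count r : ℝ) ≠ 0 := Nat.cast_ne_zero.mpr (by omega)
  have hrne : (r : ℝ) ≠ 0 := Nat.cast_ne_zero.mpr (fun he => h0 (he ▸ hmem))
  rw [Wgt_erase d hmem, mul_inv ((mu.count r : ℝ) * (2 * (r:ℝ))) (d r), mul_inv 2 (d r)]
  have haux : (mu.count r : ℝ) * r * ((mu.count r : ℝ) * (2 * (r:ℝ)))⁻¹ = 2⁻¹ := by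
    rw [mul_inv]
    field_simp
  linear_combination ((d r)⁻¹ * Wgt d (mu.erase r)) * haux

noncomputable def Sm (d : ℕ → ℝ) (m : ℕ) : ℝ := ∑ mu : Nat.Partition m, Wgt d mu.parts

lemma erase_sum {m : ℕ} (mu : Nat.Partition m) {r : ℕ} (hmem : r ∈ mu.parts) :
    (mu.parts.erase r).sum = m - r := by
  have h := congrArg Multiset.sum (Multiset.cons_erase hmem)
  rw [Multiset.sum_cons, mu.parts_sum] at h
  omega

lemma reindex (f : ℕ → Multiset ℕ → ℝ) (m : ℕ) :
    (∑ mu : Nat.Partition m, ∑ r ∈ mu.parts.toFinset, f r (mu.parts.erase r))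
      = ∑ r ∈ Icc 1 m, ∑ nu : Nat.Partition (m - r), f r nu.parts := by
  classical
  rw [← Finset.sum_sigma (univ : Finset (Nat.Partition m)) (fun mu => mu.parts.toFinset)
    (fun x => f x.2 (x.1.parts.erase x.2)),
    ← Finset.sum_sigma (Icc 1 m) (fun r => (univ : Finset (Nat.Partition (m - r))))
    (fun x => f x.1 x.2.parts)]
  refine Finset.sum_bij'
    (fun x hx => ⟨x.2, ⟨x.1.parts.erase x.2,
      fun {i} hi => x.1.parts_pos (Multiset.mem_of_mem_erase hi),
      erase_sum x.1 (Multiset.mem_toFinset.mp (Finset.mem_sigma.mp hx).2)⟩⟩)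
    (fun y hy => ⟨⟨y.1 ::ₘ y.2.parts,
      fun {i} hi => ?_, ?_⟩, y.1⟩) ?_ ?_ ?_ ?_ ?_
  · rcases Multiset.mem_cons.mp hi with h | h
    · have h1 := (Finset.mem_sigma.mp hy).1
      simp only [Finset.mem_Icc] at h1
      omega
    · exact y.2.parts_pos h
  · have h1 := (Finset.mem_sigma.mp hy).1
    simp only [Finset.mem_Icc] at h1
    have h2 := y.2.parts_sum
    simp only [Multiset.sum_cons, h2]
    omega
  · intro x hx
    have hmem : x.2 ∈ x.1.parts := Multiset.mem_toFinset.mp (Finset.mem_sigma.mp hx).2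
    refine Finset.mem_sigma.mpr ⟨Finset.mem_Icc.mpr ⟨x.1.parts_pos hmem, ?_⟩, Finset.mem_univ _⟩
    have h := Multiset.single_le_sum (fun y _ => Nat.zero_le y) _ hmem
    rw [x.1.parts_sum] at h
    exact h
  · intro y hy
    refine Finset.mem_sigma.mpr ⟨Finset.mem_univ _, ?_⟩
    rw [Multiset.mem_toFinset]
    exact Multiset.mem_cons_self _ _
  · intro x hx
    have hmem : x.2 ∈ x.1.parts := Multiset.mem_toFinset.mp (Finset.mem_sigma.mp hx).2
    obtain ⟨mu, r⟩ := x
    refine Sigma.ext ?_ ?_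
    · exact Nat.Partition.ext (Multiset.cons_erase hmem)
    · exact heq_of_eq rfl
  · intro y hy
    obtain ⟨r, nu⟩ := y
    refine Sigma.ext rfl ?_
    simp only [heq_eq_eq]
    exact Nat.Partition.ext (Multiset.erase_cons_head _ _)
  · intro x hx
    rfl

lemma Sm_rec (d : ℕ → ℝ) (m : ℕ) :
    (m : ℝ) * Sm d m = ∑ r ∈ Icc 1 m, (2 * d r)⁻¹ * Sm d (m - r) := by
  unfold Sm
  rw [Finset.mul_sum]
  have h1 : ∀ mu : Nat.Partition m,
      (m : ℝ) * Wgt d mu.parts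
        = ∑ r ∈ mu.parts.toFinset, (2 * d r)⁻¹ * Wgt d (mu.parts.erase r) := by
    intro mu
    have hm : ((mu.parts.sum : ℕ) : ℝ) = (m : ℝ) := by rw [mu.parts_sum]
    rw [← hm]
    exact sum_weight d mu.parts (fun h => by simpa using mu.parts_pos h)
  have h2 : (∑ mu : Nat.Partition m, (m : ℝ) * Wgt d mu.parts)
      = ∑ mu : Nat.Partition m,
          ∑ r ∈ mu.parts.toFinset, (2 * d r)⁻¹ * Wgt d (mu.parts.erase r) :=
    Finset.sum_congr rfl fun mu _ => h1 mu
  rw [h2, reindex (fun r s => (2 * d r)⁻¹ * Wgt d s) m]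
  apply Finset.sum_congr rfl
  intro r hr
  rw [Finset.mul_sum]

lemma conv (A B c : ℕ → ℝ)
    (hA : ∀ k : ℕ, (k : ℝ) * A k = ∑ r ∈ Icc 1 k, c r * A (k - r)) (n : ℕ) :
    ∑ k ∈ range (n + 1), ((k : ℝ) * A k) * B (n - k)
      = ∑ r ∈ Icc 1 n, c r * ∑ j ∈ range (n - r + 1), A j * B (n - r - j) := by
  classical
  have h1 : ∀ k ∈ range (n + 1), ((k : ℝ) * A k) * B (n - k)
      = ∑ r ∈ Icc 1 n, (if r ≤ k then (c r * A (k - r)) * B (n - k) else 0) := by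
    intro k hk
    simp only [Finset.mem_range] at hk
    rw [hA k, Finset.sum_mul]
    have h2 : Icc 1 k = Finset.filter (fun r => r ≤ k) (Icc 1 n) := by
      ext x
      simp only [Finset.mem_Icc, Finset.mem_filter]
      omega
    rw [h2, Finset.sum_filter]
  rw [Finset.sum_congr rfl h1, Finset.sum_comm]
  apply Finset.sum_congr rfl
  intro r hr
  simp only [Finset.mem_Icc] at hr
  rw [Finset.mul_sum, ← Finset.sum_filter]
  have h3 : Finset.filter (fun k => r ≤ k) (range (n + 1)) = Ico r (n + 1) := by
    ext x
    simp only [Finset.mem_Ico, Finset.mem_range, Finset.mem_filter]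
    omega
  rw [h3, Finset.sum_Ico_eq_sum_range]
  have hn2 : n + 1 - r = n - r + 1 := by omega
  rw [hn2]
  apply Finset.sum_congr rfl
  intro j hj
  have e1 : r + j - r = j := by omega
  have e2 : n - (r + j) = n - r - j := by omega
  rw [e1, e2]
  ring

noncomputable def Hs (dm dp : ℕ → ℝ) (n : ℕ) : ℝ :=
  ∑ k ∈ range (n + 1), Sm dm k * Sm dp (n - k)

lemma Hs_symm (dm dp : ℕ → ℝ) (n : ℕ) :
    Hs dm dp n = ∑ k ∈ range (n + 1), Sm dp k * Sm dm (n - k) := by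
  unfold Hs
  rw [← Finset.sum_range_reflect]
  apply Finset.sum_congr rfl
  intro j hj
  simp only [Finset.mem_range] at hj
  have e1 : n + 1 - 1 - j = n - j := by omega
  have e2 : n - (n - j) = j := by omega
  rw [e1, e2]
  ring

lemma Hs_rec (dm dp : ℕ → ℝ) (n : ℕ) :
    (n : ℝ) * Hs dm dp n
      = ∑ r ∈ Icc 1 n, ((2 * dm r)⁻¹ + (2 * dp r)⁻¹) * Hs dm dp (n - r) := by
  have split : (n : ℝ) * Hs dm dp n
      = (∑ k ∈ range (n + 1), ((k : ℝ) * Sm dm k) * Sm dp (n - k))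
        + ∑ k ∈ range (n + 1), ((k : ℝ) * Sm dp k) * Sm dm (n - k) := by
    have e1 : (n : ℝ) * Hs dm dp n
        = (∑ k ∈ range (n + 1), ((k : ℝ) * Sm dm k) * Sm dp (n - k))
          + ∑ k ∈ range (n + 1), (((n - k : ℕ) : ℝ) * Sm dp (n - k)) * Sm dm k := by
      unfold Hs
      rw [Finset.mul_sum, ← Finset.sum_add_distrib]
      apply Finset.sum_congr rfl
      intro k hk
      simp only [Finset.mem_range] at hk
      have : ((n - k : ℕ) : ℝ) = (n : ℝ) - k := by
        push_cast [Nat.cast_sub (by omega : k ≤ n)]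
        ring
      rw [this]
      ring
    rw [e1]
    congr 1
    rw [← Finset.sum_range_reflect]
    apply Finset.sum_congr rfl
    intro j hj
    simp only [Finset.mem_range] at hj
    have e1 : n + 1 - 1 - j = n - j := by omega
    have e2 : n - (n - j) = j := by omega
    rw [e1, e2]
  rw [split, conv (Sm dm) (Sm dp) (fun r => (2 * dm r)⁻¹) (Sm_rec dm) n,
    conv (Sm dp) (Sm dm) (fun r => (2 * dp r)⁻¹) (Sm_rec dp) n, ← Finset.sum_add_distrib]
  apply Finset.sum_congr rfl
  intro r hr
  have hH1 : Hs dm dp (n - r) = ∑ j ∈ range (n - r + 1), Sm dm j * Sm dp (n - r - j) := rfl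
  have hH2 : Hs dm dp (n - r) = ∑ j ∈ range (n - r + 1), Sm dp j * Sm dm (n - r - j) := by
    rw [Hs_symm]
  rw [← hH1, ← hH2]
  ring

lemma Sm_zero (d : ℕ → ℝ) : Sm d 0 = 1 := by
  unfold Sm
  rw [Finset.univ_unique, Finset.sum_singleton]
  have h : (default : Nat.Partition 0).parts = 0 := Nat.Partition.partition_zero_parts _
  unfold Wgt
  rw [h]
  simp



lemma ccsum {q : ℝ} (hq : 1 < q) {r : ℕ} (hr : 1 ≤ r) :
    (2 * (q ^ r - 1))⁻¹ + (2 * (q ^ r + 1))⁻¹ = cc q r := by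
  have hq0 : (0 : ℝ) < q := lt_trans one_pos hq
  have h1 : q ^ r - 1 ≠ 0 := by
    have : 1 < q ^ r := one_lt_pow₀ hq (by omega)
    intro h; linarith [sub_eq_zero.mp h]
  have h2 : q ^ r + 1 ≠ 0 := by positivity
  have h3 : q ^ (2 * r) - 1 = (q ^ r - 1) * (q ^ r + 1) := by
    rw [two_mul, pow_add]; ring
  unfold cc
  rw [h3]
  field_simp
  ring

lemma Hs_eq_aa {q : ℝ} (hq : 1 < q) (n : ℕ) :
    Hs (fun r => q ^ r - 1) (fun r => q ^ r + 1) n = aa q n := by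
  induction n using Nat.strong_induction_on with
  | _ n ih =>
    match n with
    | 0 =>
      have h1 : Hs (fun r => q ^ r - 1) (fun r => q ^ r + 1) 0 = 1 := by
        unfold Hs
        simp [Sm_zero]
      have h2 : aa q 0 = 1 := by unfold aa; simp
      rw [h1, h2]
    | (m + 1) =>
      have hne : ((m + 1 : ℕ) : ℝ) ≠ 0 := by positivity
      apply mul_left_cancel₀ hne
      rw [Hs_rec, aa_rec hq (by omega)]
      apply Finset.sum_congr rfl
      intro r hr
      simp only [Finset.mem_Icc] at hr
      rw [ih (m + 1 - r) (by omega), ccsum hq hr.1]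

end SteinbergBC

open SteinbergBC in
lemma Wgt_eq_inv (d : ℕ → ℝ) (mu : Multiset ℕ) :
    Wgt d mu = ((vOf mu : ℝ) * ∏ r ∈ mu.toFinset, d r ^ (mu.count r))⁻¹ := by
  unfold Wgt vOf
  push_cast
  rw [← Finset.prod_mul_distrib, ← Finset.prod_inv_distrib]

open SteinbergBC in
lemma NBC_eq {q : ℝ} (n : ℕ) {a b : ℕ} (nu : Nat.Partition a) (ka : Nat.Partition b) :
    NBC q n nu ka = Spcard q n *
      (Wgt (fun r => q ^ r - 1) nu.parts * Wgt (fun r => q ^ r + 1) ka.parts) := by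
  unfold NBC
  rw [Wgt_eq_inv, Wgt_eq_inv, div_eq_mul_inv]
  congr 1
  rw [← mul_inv]
  congr 1
  ring

/-- **Corollary 3.4 (Steinberg's count)**: the sum of `N(n,q,ν,κ)` over all double
partitions `(ν,κ)` of `n` equals `q^{2n²}`.  The sum over double partitions of `n` is
realized as a sum over `k ≤ n`, `ν` a partition of `k` and `κ` a partition of `n - k`. -/

theorem count_tori_typeBC (n : ℕ) (q : ℝ) (hq : 1 < q) :
    (∑ k ∈ Finset.range (n + 1), ∑ nu : Nat.Partition k, ∑ ka : Nat.Partition (n - k),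
        NBC q n nu ka) = q ^ (2 * n ^ 2) := by
  classical
  have hq0 : (0 : ℝ) < q := lt_trans one_pos hq
  set dm : ℕ → ℝ := fun r => q ^ r - 1 with hdm
  set dp : ℕ → ℝ := fun r => q ^ r + 1 with hdp
  have hstep : (∑ k ∈ Finset.range (n + 1), ∑ nu : Nat.Partition k,
      ∑ ka : Nat.Partition (n - k), NBC q n nu ka)
      = Spcard q n * SteinbergBC.Hs dm dp n := by
    unfold SteinbergBC.Hs
    rw [Finset.mul_sum]
    apply Finset.sum_congr rfl
    intro k hk
    have h1 : ∀ nu : Nat.Partition k, ∀ ka : Nat.Partition (n - k),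
        NBC q n nu ka = Spcard q n *
          (SteinbergBC.Wgt dm nu.parts * SteinbergBC.Wgt dp ka.parts) :=
      fun nu ka => NBC_eq n nu ka
    calc (∑ nu : Nat.Partition k, ∑ ka : Nat.Partition (n - k), NBC q n nu ka)
        = ∑ nu : Nat.Partition k, ∑ ka : Nat.Partition (n - k),
            Spcard q n * (SteinbergBC.Wgt dm nu.parts * SteinbergBC.Wgt dp ka.parts) := by
          apply Finset.sum_congr rfl
          intro nu _
          exact Finset.sum_congr rfl fun ka _ => h1 nu ka
      _ = Spcard q n * (SteinbergBC.Sm dm k * SteinbergBC.Sm dp (n - k)) := by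
          unfold SteinbergBC.Sm
          rw [Finset.sum_mul, Finset.mul_sum]
          apply Finset.sum_congr rfl
          intro nu _
          rw [Finset.mul_sum, Finset.mul_sum]
  rw [hstep, SteinbergBC.Hs_eq_aa hq n]
  unfold Spcard SteinbergBC.aa
  have hIcc : Finset.Icc 1 n = Finset.Ioc 0 n := by
    rw [← Finset.Icc_add_one_left_eq_Ioc]
    rfl
  have hP : (0 : ℝ) < ∏ i ∈ Finset.Ioc 0 n, (q ^ (2 * i) - 1) :=
    SteinbergBC.prod_factors_pos hq n
  rw [hIcc]
  field_simp
  have hq2 : q ^ (n ^ 2) * q ^ (n ^ 2) = q ^ (2 * n ^ 2) := by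
    rw [← pow_add]
    congr 1
    ring
  linear_combination (∏ i ∈ Finset.Ioc 0 n, (q ^ (2 * i) - 1)) * hq2
end

section
/- Fix a double partition (μ,λ). Then in the ring ℚ[[z]][[u]] of formal power series in u with coefficients in ℚ[[z]]: Σ_{n≥0} g_n(μ,λ) u^n = (1/(v_μ v_λ)) · ∏_{r≥1} (u^r/(1-z^r))^{n_r(μ)} · ∏_{r≥1} (u^r/(1+z^r))^{n_r(λ)} · Σ_{m≥0} u^m / ∏_{i=1}^m (1-z^{2i}), where the last factor is the expansion of the infinite product ∏_{r≥1} (1-u z^{2r-2})^{-1}, and 1/(1±z^r) denotes the inverse of 1±z^r in ℚ[[z]]. -/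
open Finset PowerSeries

/-- `∏_{r≥1} (1-z^r)^{-n_r(ν)} ∈ ℚ[[z]]`. -/
noncomputable def facMinus (nu : Multiset ℕ) : PowerSeries ℚ :=
  ∏ r ∈ nu.toFinset, ((1 - (PowerSeries.X : PowerSeries ℚ) ^ r)⁻¹) ^ (nu.count r)

/-- `∏_{r≥1} (1+z^r)^{-n_r(κ)} ∈ ℚ[[z]]`. -/
noncomputable def facPlus (ka : Multiset ℕ) : PowerSeries ℚ :=
  ∏ r ∈ ka.toFinset, ((1 + (PowerSeries.X : PowerSeries ℚ) ^ r)⁻¹) ^ (ka.count r)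

/-- `g_n(μ,λ) = Σ_{(ν,κ) ⊢ n} binom(ν,μ)binom(κ,λ)/(v_ν v_κ) ·
∏ (1-z^r)^{-n_r(ν)} (1+z^r)^{-n_r(κ)} ∈ ℚ[[z]]`; the sum over double partitions of `n`
is realized as a sum over `k ≤ n`, `ν ⊢ k`, `κ ⊢ n - k`. -/
noncomputable def gSer (muP lamP : Multiset ℕ) (n : ℕ) : PowerSeries ℚ :=
  ∑ k ∈ Finset.range (n + 1), ∑ nu : Nat.Partition k, ∑ ka : Nat.Partition (n - k),
    PowerSeries.C (R := ℚ)
        (((binomOf nu.parts muP : ℚ) * (binomOf ka.parts lamP : ℚ)) /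
          ((vOf nu.parts : ℚ) * (vOf ka.parts : ℚ))) *
      facMinus nu.parts * facPlus ka.parts

namespace TwistedBettiAux

noncomputable section

abbrev R := PowerSeries ℚ

/-- Generic partition-term: `∏_r (1/n_r!) f(r)^{n_r}`. -/
def termM (f : ℕ → R) (s : Multiset ℕ) : R :=
  ∏ r ∈ s.toFinset, (PowerSeries.C (R := ℚ) (((s.count r).factorial : ℚ))⁻¹ * f r ^ s.count r)

/-- `T_f(m) = Σ_{ν ⊢ m} termM f ν`. -/
def TT (f : ℕ → R) (m : ℕ) : R := ∑ ν : Nat.Partition m, termM f ν.parts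

lemma termM_zero (f : ℕ → R) : termM f 0 = 1 := by simp [termM]

lemma parts_eq_zero {ν : Nat.Partition 0} : ν.parts = 0 := by
  apply Multiset.eq_zero_of_forall_notMem
  intro i hi
  have h1 : 0 < i := ν.parts_pos hi
  have h2 : i ≤ ν.parts.sum := Multiset.single_le_sum (fun _ _ => Nat.zero_le _) _ hi
  rw [ν.parts_sum] at h2
  omega

lemma TT_zero (f : ℕ → R) : TT f 0 = 1 := by
  rw [TT, Fintype.sum_eq_single default (fun ν hν => absurd (Nat.Partition.ext (parts_eq_zero.trans parts_eq_zero.symm)) hν)]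
  rw [parts_eq_zero, termM_zero]

lemma termM_congr {f g : ℕ → R} {s : Multiset ℕ} (h : ∀ r ∈ s, f r = g r) :
    termM f s = termM g s := by
  refine Finset.prod_congr rfl fun r hr => ?_
  rw [h r (Multiset.mem_toFinset.mp hr)]

lemma TT_congr {f g : ℕ → R} (h : ∀ r, 0 < r → f r = g r) (m : ℕ) : TT f m = TT g m := by
  refine Finset.sum_congr rfl fun ν _ => termM_congr fun r hr => h r (ν.parts_pos hr)

lemma termM_subset (f : ℕ → R) (s : Multiset ℕ) {t : Finset ℕ} (h : s.toFinset ⊆ t) :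
    termM f s = ∏ r ∈ t, (PowerSeries.C (R := ℚ) (((s.count r).factorial : ℚ))⁻¹ * f r ^ s.count r) := by
  refine Finset.prod_subset h fun r _ hr => ?_
  rw [Multiset.count_eq_zero_of_notMem (fun hmem => hr (Multiset.mem_toFinset.mpr hmem))]
  simp

lemma termM_cons (f : ℕ → R) (r : ℕ) (s : Multiset ℕ) :
    ((s.count r + 1 : ℕ) : ℚ) • termM f (r ::ₘ s) = f r * termM f s := by
  classical
  set t : Finset ℕ := insert r s.toFinset with ht
  have hmem : r ∈ t := Finset.mem_insert_self r _
  have h1 : termM f (r ::ₘ s) =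
      ∏ x ∈ t, (PowerSeries.C (R := ℚ) ((((r ::ₘ s).count x).factorial : ℚ))⁻¹ * f x ^ (r ::ₘ s).count x) := by
    apply termM_subset
    rw [Multiset.toFinset_cons]
  have h2 : termM f s =
      ∏ x ∈ t, (PowerSeries.C (R := ℚ) (((s.count x).factorial : ℚ))⁻¹ * f x ^ s.count x) := by
    apply termM_subset
    exact Finset.subset_insert _ _
  rw [h1, h2, ← Finset.mul_prod_erase t _ hmem, ← Finset.mul_prod_erase t
    (fun x => (PowerSeries.C (R := ℚ) (((s.count x).factorial : ℚ))⁻¹ * f x ^ s.count x)) hmem]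
  have hprod : ∏ x ∈ t.erase r,
      (PowerSeries.C (R := ℚ) ((((r ::ₘ s).count x).factorial : ℚ))⁻¹ * f x ^ (r ::ₘ s).count x) =
      ∏ x ∈ t.erase r, (PowerSeries.C (R := ℚ) (((s.count x).factorial : ℚ))⁻¹ * f x ^ s.count x) := by
    refine Finset.prod_congr rfl fun x hx => ?_
    rw [Multiset.count_cons_of_ne (Finset.ne_of_mem_erase hx) ]
  rw [hprod, Multiset.count_cons_self, ← smul_mul_assoc, ← mul_assoc]
  congr 1
  rw [smul_eq_C_mul, ← mul_assoc, ← map_mul, Nat.factorial_succ, pow_succ]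
  have hq : ((s.count r + 1 : ℕ) : ℚ) * (((s.count r + 1) * (s.count r).factorial : ℕ) : ℚ)⁻¹
      = (((s.count r).factorial : ℕ) : ℚ)⁻¹ := by
    push_cast
    rw [mul_inv]
    have : ((s.count r : ℚ) + 1) ≠ 0 := by positivity
    field_simp
  rw [hq]
  ring


/-- Reindexing sums over partitions of `k` supported on `ν ⊇ μ` by partitions of `k - |μ|`. -/
lemma sum_partition_restrict {M : Type*} [AddCommMonoid M] (μ : Multiset ℕ)
    (hμ : ∀ i ∈ μ, 0 < i) {k : ℕ} (hk : μ.sum ≤ k) (φ : Multiset ℕ → M)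
    (hφ : ∀ s : Multiset ℕ, ¬ μ ≤ s → φ s = 0) :
    ∑ ν : Nat.Partition k, φ ν.parts = ∑ ρ : Nat.Partition (k - μ.sum), φ (ρ.parts + μ) := by
  classical
  rw [← Finset.sum_filter_add_sum_filter_not Finset.univ (fun ν : Nat.Partition k => μ ≤ ν.parts)]
  have h2 : ∑ ν ∈ Finset.univ.filter (fun ν : Nat.Partition k => ¬ μ ≤ ν.parts), φ ν.parts = 0 :=
    Finset.sum_eq_zero fun ν hν => hφ _ (Finset.mem_filter.mp hν).2
  rw [h2, add_zero]
  have hsub : ∀ ν : Nat.Partition k,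
      ν ∈ Finset.univ.filter (fun ν : Nat.Partition k => μ ≤ ν.parts) → (ν.parts - μ).sum = k - μ.sum := by
    intro ν hν
    have hle : μ ≤ ν.parts := (Finset.mem_filter.mp hν).2
    have := congrArg Multiset.sum (tsub_add_cancel_of_le hle)
    rw [Multiset.sum_add, ν.parts_sum] at this
    omega
  refine Finset.sum_bij'
    (i := fun ν hν => (⟨ν.parts - μ, fun {i} hi => ?_, hsub ν hν⟩ : Nat.Partition (k - μ.sum)))
    (j := fun ρ _ => (⟨ρ.parts + μ, fun {i} hi => ?_, by rw [Multiset.sum_add, ρ.parts_sum]; omega⟩ :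
      Nat.Partition k)) ?_ ?_ ?_ ?_ ?_
  · have hmem : i ∈ ν.parts := by
      have := Multiset.count_pos.mpr hi
      rw [Multiset.count_sub] at this
      exact Multiset.count_pos.mp (by omega)
    exact ν.parts_pos hmem
  · rcases Multiset.mem_add.mp hi with h | h
    · exact ρ.parts_pos h
    · exact hμ _ h
  · intro ν hν; exact Finset.mem_univ _
  · intro ρ hρ
    exact Finset.mem_filter.mpr ⟨Finset.mem_univ _, Multiset.le_add_left _ _⟩
  · intro ν hν
    exact Nat.Partition.ext (tsub_add_cancel_of_le (Finset.mem_filter.mp hν).2)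
  · intro ρ hρ
    exact Nat.Partition.ext (add_tsub_cancel_right _ _)
  · intro ν hν
    rw [tsub_add_cancel_of_le (Finset.mem_filter.mp hν).2]

lemma multiset_sum_eq_sum_count (s : Multiset ℕ) :
    s.sum = ∑ r ∈ s.toFinset, s.count r * r := by
  conv_lhs => rw [show s.sum = (s.map id).sum by rw [Multiset.map_id]]
  rw [Finset.sum_multiset_map_count]
  simp [smul_eq_mul]

/-- Newton-type recursion for `TT`. -/
lemma newton (f : ℕ → R) (m : ℕ) :
    (m : ℚ) • TT f m = ∑ r ∈ Finset.Icc 1 m, (r : ℚ) • (f r * TT f (m - r)) := by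
  classical
  have hstep : ∀ ν : Nat.Partition m,
      (m : ℚ) • termM f ν.parts
        = ∑ r ∈ Finset.Icc 1 m, ((ν.parts.count r * r : ℕ) : ℚ) • termM f ν.parts := by
    intro ν
    rw [← Finset.sum_smul]
    congr 1
    have hsub : ν.parts.toFinset ⊆ Finset.Icc 1 m := by
      intro r hr
      have hrparts := Multiset.mem_toFinset.mp hr
      have h1 : 0 < r := ν.parts_pos hrparts
      have h2 : r ≤ ν.parts.sum := Multiset.single_le_sum (fun _ _ => Nat.zero_le _) _ hrparts
      rw [ν.parts_sum] at h2
      exact Finset.mem_Icc.mpr ⟨h1, h2⟩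
    have : ∑ r ∈ Finset.Icc 1 m, ((ν.parts.count r * r : ℕ) : ℚ)
        = ∑ r ∈ ν.parts.toFinset, ((ν.parts.count r * r : ℕ) : ℚ) := by
      refine (Finset.sum_subset hsub fun r _ hr => ?_).symm
      rw [Multiset.count_eq_zero_of_notMem (fun hmem => hr (Multiset.mem_toFinset.mpr hmem))]
      simp
    rw [this, ← Nat.cast_sum, ← multiset_sum_eq_sum_count, ν.parts_sum]
  rw [TT, Finset.smul_sum]
  calc ∑ ν : Nat.Partition m, (m : ℚ) • termM f ν.parts
      = ∑ ν : Nat.Partition m, ∑ r ∈ Finset.Icc 1 m,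
          ((ν.parts.count r * r : ℕ) : ℚ) • termM f ν.parts := Finset.sum_congr rfl fun ν _ => hstep ν
    _ = ∑ r ∈ Finset.Icc 1 m, ∑ ν : Nat.Partition m,
          ((ν.parts.count r * r : ℕ) : ℚ) • termM f ν.parts := Finset.sum_comm
    _ = ∑ r ∈ Finset.Icc 1 m, (r : ℚ) • (f r * TT f (m - r)) := ?_
  refine Finset.sum_congr rfl fun r hr => ?_
  obtain ⟨hr1, hrm⟩ := Finset.mem_Icc.mp hr
  have hrestrict := sum_partition_restrict {r} (by simpa using (show 0 < r by omega))
      (k := m) (by simpa using hrm)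
      (fun s => ((s.count r * r : ℕ) : ℚ) • termM f s)
      (fun s hs => by
        have hns : r ∉ s := fun hmem => hs (Multiset.singleton_le.mpr hmem)
        rw [Multiset.count_eq_zero_of_notMem hns]
        simp)
  rw [show Multiset.sum {r} = r by simp] at hrestrict
  rw [hrestrict]
  rw [TT, Finset.mul_sum, Finset.smul_sum]
  refine Finset.sum_congr rfl fun ρ _ => ?_
  have hcons : ρ.parts + {r} = r ::ₘ ρ.parts := by
    rw [add_comm, Multiset.singleton_add]
  rw [hcons, Multiset.count_cons_self]
  have : (((ρ.parts.count r + 1) * r : ℕ) : ℚ) = (r : ℚ) * ((ρ.parts.count r + 1 : ℕ) : ℚ) := by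
    push_cast; ring
  rw [this, ← smul_smul, termM_cons]

/-- Sequences satisfying the same Newton-type recursion agree. -/
lemma rec_unique (F : ℕ → R) (a b : ℕ → R) (h0 : a 0 = b 0)
    (ha : ∀ m : ℕ, (m:ℚ) • a m = ∑ r ∈ Finset.Icc 1 m, (r:ℚ) • (F r * a (m-r)))
    (hb : ∀ m : ℕ, (m:ℚ) • b m = ∑ r ∈ Finset.Icc 1 m, (r:ℚ) • (F r * b (m-r))) :
    ∀ m, a m = b m := by
  intro m
  induction m using Nat.strong_induction_on with
  | _ m ih =>
    match m with
    | 0 => exact h0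
    | (m+1) =>
      have key : ((m+1 : ℕ):ℚ) • a (m+1) = ((m+1:ℕ):ℚ) • b (m+1) := by
        rw [ha, hb]
        refine Finset.sum_congr rfl fun r hr => ?_
        obtain ⟨hr1, hr2⟩ := Finset.mem_Icc.mp hr
        rw [ih (m+1-r) (by omega)]
      have hne : ((m+1:ℕ):ℚ) ≠ 0 := Nat.cast_ne_zero.mpr (by omega)
      calc a (m+1) = (((m+1:ℕ):ℚ))⁻¹ • (((m+1:ℕ):ℚ) • a (m+1)) := by
            rw [smul_smul, inv_mul_cancel₀ hne, one_smul]
        _ = (((m+1:ℕ):ℚ))⁻¹ • (((m+1:ℕ):ℚ) • b (m+1)) := by rw [key]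
        _ = b (m+1) := by rw [smul_smul, inv_mul_cancel₀ hne, one_smul]

/-- Convolution of two sequences satisfying Newton-type recursions satisfies the
recursion for the sum of the weights. -/
lemma newton_conv (F G : ℕ → R) (a b : ℕ → R)
    (ha : ∀ m : ℕ, (m:ℚ) • a m = ∑ r ∈ Finset.Icc 1 m, (r:ℚ) • (F r * a (m-r)))
    (hb : ∀ m : ℕ, (m:ℚ) • b m = ∑ r ∈ Finset.Icc 1 m, (r:ℚ) • (G r * b (m-r))) (m : ℕ) :
    (m:ℚ) • (∑ k ∈ Finset.range (m+1), a k * b (m-k))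
      = ∑ r ∈ Finset.Icc 1 m, (r:ℚ) •
          ((F r + G r) * ∑ k ∈ Finset.range (m-r+1), a k * b (m-r-k)) := by
  rw [Finset.smul_sum]
  have hsplit : ∀ k ∈ Finset.range (m+1),
      (m:ℚ) • (a k * b (m-k)) = ((k:ℚ) • a k) * b (m-k) + a k * (((m-k : ℕ):ℚ) • b (m-k)) := by
    intro k hk
    have hk' : k ≤ m := by
      have := Finset.mem_range.mp hk; omega
    have hcast : (m:ℚ) = (k:ℚ) + ((m-k:ℕ):ℚ) := by
      rw [← Nat.cast_add, Nat.add_sub_cancel' hk']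
    rw [hcast, add_smul, smul_mul_assoc, mul_smul_comm]
  rw [Finset.sum_congr rfl hsplit, Finset.sum_add_distrib]
  have hS1 : ∑ k ∈ Finset.range (m+1), ((k:ℚ) • a k) * b (m-k)
      = ∑ r ∈ Finset.Icc 1 m, (r:ℚ) • (F r * ∑ k ∈ Finset.range (m-r+1), a k * b (m-r-k)) := by
    calc ∑ k ∈ Finset.range (m+1), ((k:ℚ) • a k) * b (m-k)
        = ∑ k ∈ Finset.range (m+1), ∑ r ∈ Finset.Icc 1 k,
            (r:ℚ) • (F r * a (k-r) * b (m-k)) := by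
          refine Finset.sum_congr rfl fun k _ => ?_
          rw [ha k, Finset.sum_mul]
          exact Finset.sum_congr rfl fun r _ => by rw [smul_mul_assoc]
      _ = ∑ r ∈ Finset.Icc 1 m, ∑ k ∈ Finset.Icc r m,
            (r:ℚ) • (F r * a (k-r) * b (m-k)) := by
          refine Finset.sum_comm' ?_
          intro k r
          simp only [Finset.mem_range, Finset.mem_Icc]
          omega
      _ = ∑ r ∈ Finset.Icc 1 m, (r:ℚ) •
            (F r * ∑ k ∈ Finset.range (m-r+1), a k * b (m-r-k)) := by
          refine Finset.sum_congr rfl fun r hr => ?_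
          obtain ⟨hr1, hr2⟩ := Finset.mem_Icc.mp hr
          rw [← Finset.Ico_add_one_right_eq_Icc, Finset.sum_Ico_eq_sum_range]
          have hcard : m + 1 - r = m - r + 1 := by omega
          rw [hcard, Finset.mul_sum, Finset.smul_sum]
          refine Finset.sum_congr rfl fun i hi => ?_
          have e1 : r + i - r = i := by omega
          have e2 : m - (r + i) = m - r - i := by omega
          rw [e1, e2, mul_assoc]
  have hS2 : ∑ k ∈ Finset.range (m+1), a k * (((m-k:ℕ):ℚ) • b (m-k))
      = ∑ r ∈ Finset.Icc 1 m, (r:ℚ) • (G r * ∑ k ∈ Finset.range (m-r+1), a k * b (m-r-k)) := by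
    calc ∑ k ∈ Finset.range (m+1), a k * (((m-k:ℕ):ℚ) • b (m-k))
        = ∑ k ∈ Finset.range (m+1), ∑ r ∈ Finset.Icc 1 (m-k),
            (r:ℚ) • (G r * (a k * b (m-k-r))) := by
          refine Finset.sum_congr rfl fun k _ => ?_
          rw [hb (m-k), Finset.mul_sum]
          refine Finset.sum_congr rfl fun r _ => ?_
          rw [mul_smul_comm, mul_left_comm]
      _ = ∑ r ∈ Finset.Icc 1 m, ∑ k ∈ Finset.range (m-r+1),
            (r:ℚ) • (G r * (a k * b (m-k-r))) := by
          refine Finset.sum_comm' ?_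
          intro k r
          simp only [Finset.mem_range, Finset.mem_Icc]
          omega
      _ = ∑ r ∈ Finset.Icc 1 m, (r:ℚ) •
            (G r * ∑ k ∈ Finset.range (m-r+1), a k * b (m-r-k)) := by
          refine Finset.sum_congr rfl fun r hr => ?_
          rw [Finset.mul_sum, Finset.smul_sum]
          refine Finset.sum_congr rfl fun i hi => ?_
          rw [Nat.sub_right_comm]
  rw [hS1, hS2, ← Finset.sum_add_distrib]
  refine Finset.sum_congr rfl fun r _ => ?_
  rw [← smul_add, ← add_mul]

/-- The splitting (exponential) lemma. -/
lemma TT_conv (f g : ℕ → R) (m : ℕ) :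
    ∑ k ∈ Finset.range (m+1), TT f k * TT g (m-k) = TT (fun r => f r + g r) m := by
  refine rec_unique (fun r => f r + g r)
    (fun m => ∑ k ∈ Finset.range (m+1), TT f k * TT g (m-k))
    (TT (fun r => f r + g r)) ?_ ?_ (newton _) m
  · rw [Finset.sum_range_one, Nat.sub_zero, TT_zero, TT_zero, TT_zero, one_mul]
  · intro n
    exact newton_conv f g (TT f) (TT g) (newton f) (newton g) n

lemma termM_grade (f : ℕ → R) (s : Multiset ℕ) :
    termM (fun r => PowerSeries.X ^ (2*r) * f r) s
      = PowerSeries.X ^ (2 * s.sum) * termM f s := by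
  rw [termM, termM]
  have h1 : ∀ r ∈ s.toFinset,
      PowerSeries.C (R := ℚ) (((s.count r).factorial : ℚ))⁻¹ *
          ((PowerSeries.X : R) ^ (2*r) * f r) ^ s.count r
      = (PowerSeries.X : R) ^ (2 * (s.count r * r)) *
        (PowerSeries.C (R := ℚ) (((s.count r).factorial : ℚ))⁻¹ * f r ^ s.count r) := by
    intro r _
    rw [mul_pow, ← pow_mul, show 2*r*(s.count r) = 2*(s.count r * r) from by ring, mul_left_comm]
  rw [Finset.prod_congr rfl h1, Finset.prod_mul_distrib, Finset.prod_pow_eq_pow_sum,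
    ← Finset.mul_sum, ← multiset_sum_eq_sum_count]

lemma TT_grade (f : ℕ → R) (m : ℕ) :
    TT (fun r => PowerSeries.X ^ (2*r) * f r) m = PowerSeries.X ^ (2*m) * TT f m := by
  rw [TT, TT, Finset.mul_sum]
  refine Finset.sum_congr rfl fun ν _ => ?_
  rw [termM_grade, ν.parts_sum]

lemma TT_one (m : ℕ) : TT (fun r => PowerSeries.C (R := ℚ) ((r:ℚ))⁻¹) m = 1 := by
  have := rec_unique (fun r => PowerSeries.C (R := ℚ) ((r:ℚ))⁻¹)
    (TT (fun r => PowerSeries.C (R := ℚ) ((r:ℚ))⁻¹)) (fun _ => (1:R)) (TT_zero _) (newton _) ?_ m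
  · exact this
  · intro n
    have hterm : ∀ r ∈ Finset.Icc 1 n,
        (r:ℚ) • (PowerSeries.C (R := ℚ) ((r:ℚ))⁻¹ * (1:R)) = (1:R) := by
      intro r hr
      obtain ⟨hr1, _⟩ := Finset.mem_Icc.mp hr
      have hne : (r:ℚ) ≠ 0 := Nat.cast_ne_zero.mpr (by omega)
      rw [mul_one, smul_eq_C_mul, ← map_mul, mul_inv_cancel₀ hne, map_one]
    rw [Finset.sum_congr rfl hterm, Finset.sum_const, Nat.card_Icc]
    rw [smul_eq_C_mul, mul_one, nsmul_eq_mul, mul_one]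
    rw [show n + 1 - 1 = n from rfl]
    rw [map_natCast]

def fm : ℕ → R := fun r => PowerSeries.C (R := ℚ) (2*(r:ℚ))⁻¹ * ((1 - (PowerSeries.X : R) ^ r)⁻¹)
def fp : ℕ → R := fun r => PowerSeries.C (R := ℚ) (2*(r:ℚ))⁻¹ * ((1 + (PowerSeries.X : R) ^ r)⁻¹)
def Fc : ℕ → R := fun r => PowerSeries.C (R := ℚ) ((r:ℚ))⁻¹ * ((1 - (PowerSeries.X : R) ^ (2*r))⁻¹)

def Qs (m : ℕ) : R := (∏ i ∈ Finset.Icc 1 m, (1 - (PowerSeries.X : R) ^ (2*i)))⁻¹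

lemma cc_X_pow (r : ℕ) (h : 0 < r) : constantCoeff (R := ℚ) ((PowerSeries.X : R) ^ r) = 0 := by
  rw [map_pow, constantCoeff_X, zero_pow (by omega)]

lemma cc_one_sub (r : ℕ) (h : 0 < r) :
    constantCoeff (R := ℚ) (1 - (PowerSeries.X : R) ^ r) = 1 := by
  rw [map_sub, map_one, cc_X_pow r h, sub_zero]

lemma cc_one_add (r : ℕ) (h : 0 < r) :
    constantCoeff (R := ℚ) (1 + (PowerSeries.X : R) ^ r) = 1 := by
  rw [map_add, map_one, cc_X_pow r h, add_zero]

lemma key1 : ∀ r : ℕ, 0 < r → fm r + fp r = Fc r := by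
  intro r hr
  set a : R := 1 - (PowerSeries.X : R) ^ r with ha
  set b : R := 1 + (PowerSeries.X : R) ^ r with hb
  have hca : constantCoeff (R := ℚ) a ≠ 0 := by rw [cc_one_sub r hr]; norm_num
  have hcb : constantCoeff (R := ℚ) b ≠ 0 := by rw [cc_one_add r hr]; norm_num
  have hab : a * b = 1 - (PowerSeries.X : R) ^ (2*r) := by
    have : (PowerSeries.X : R) ^ (2*r) = (PowerSeries.X : R) ^ r * (PowerSeries.X : R) ^ r := by
      rw [two_mul, pow_add]
    rw [this, ha, hb]; ring
  have hinv : a⁻¹ + b⁻¹ = 2 * (1 - (PowerSeries.X : R) ^ (2*r))⁻¹ := by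
    rw [← hab, PowerSeries.mul_inv_rev]
    have h2 : a + b = 2 := by rw [ha, hb]; ring
    calc a⁻¹ + b⁻¹ = a⁻¹ * (b * b⁻¹) + (a * a⁻¹) * b⁻¹ := by
          rw [PowerSeries.mul_inv_cancel b hcb, PowerSeries.mul_inv_cancel a hca, mul_one, one_mul]
      _ = (a + b) * (b⁻¹ * a⁻¹) := by ring
      _ = 2 * (b⁻¹ * a⁻¹) := by rw [h2]
  have hne : (r:ℚ) ≠ 0 := Nat.cast_ne_zero.mpr (by omega)
  rw [fm, fp, Fc]
  rw [← ha, ← hb, ← mul_add, hinv, ← mul_assoc]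
  congr 1
  rw [(map_ofNat (PowerSeries.C (R := ℚ)) 2).symm, ← map_mul]
  congr 1
  field_simp

lemma key2 : ∀ r : ℕ, 0 < r →
    Fc r = PowerSeries.C (R := ℚ) ((r:ℚ))⁻¹ + PowerSeries.X ^ (2*r) * Fc r := by
  intro r hr
  set t : R := 1 - (PowerSeries.X : R) ^ (2*r) with ht
  have hct : constantCoeff (R := ℚ) t ≠ 0 := by rw [cc_one_sub (2*r) (by omega)]; norm_num
  have hkey : t⁻¹ = 1 + (PowerSeries.X : R) ^ (2*r) * t⁻¹ := by
    calc t⁻¹ = (t + (PowerSeries.X : R) ^ (2*r)) * t⁻¹ := by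
          rw [ht, sub_add_cancel, one_mul]
      _ = t * t⁻¹ + (PowerSeries.X : R) ^ (2*r) * t⁻¹ := by ring
      _ = 1 + (PowerSeries.X : R) ^ (2*r) * t⁻¹ := by rw [PowerSeries.mul_inv_cancel t hct]
  rw [Fc]
  rw [← ht]
  calc PowerSeries.C (R := ℚ) ((r:ℚ))⁻¹ * t⁻¹
      = PowerSeries.C (R := ℚ) ((r:ℚ))⁻¹ * (1 + (PowerSeries.X : R) ^ (2*r) * t⁻¹) := by rw [← hkey]
    _ = PowerSeries.C (R := ℚ) ((r:ℚ))⁻¹ + PowerSeries.X ^ (2*r) * (PowerSeries.C (R := ℚ) ((r:ℚ))⁻¹ * t⁻¹) := by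
        ring

lemma Qs_zero : Qs 0 = 1 := by
  rw [Qs]
  simp

lemma Qs_rec (m : ℕ) : (1 - (PowerSeries.X : R) ^ (2*(m+1))) * Qs (m+1) = Qs m := by
  rw [Qs, Qs, Finset.prod_Icc_succ_top (by omega : 1 ≤ m + 1), PowerSeries.mul_inv_rev]
  rw [← mul_assoc, PowerSeries.mul_inv_cancel _ (by rw [cc_one_sub (2*(m+1)) (by omega)]; norm_num),
    one_mul]

lemma TT_Fc_sum (m : ℕ) :
    TT Fc m = ∑ j ∈ Finset.range (m+1), PowerSeries.X ^ (2*j) * TT Fc j := by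
  have h1 : TT Fc m = TT (fun r => PowerSeries.C (R := ℚ) ((r:ℚ))⁻¹ + PowerSeries.X ^ (2*r) * Fc r) m :=
    TT_congr key2 m
  rw [h1, ← TT_conv]
  calc ∑ k ∈ Finset.range (m+1),
        TT (fun r => PowerSeries.C (R := ℚ) ((r:ℚ))⁻¹) k * TT (fun r => PowerSeries.X ^ (2*r) * Fc r) (m-k)
      = ∑ k ∈ Finset.range (m+1), PowerSeries.X ^ (2*(m-k)) * TT Fc (m-k) := by
        refine Finset.sum_congr rfl fun k _ => ?_
        rw [TT_one, TT_grade, one_mul]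
    _ = ∑ j ∈ Finset.range (m+1), PowerSeries.X ^ (2*j) * TT Fc j := by
        rw [← Finset.sum_range_reflect]
        refine Finset.sum_congr rfl fun j hj => ?_
        have he : m - (m + 1 - 1 - j) = j := by
          have := Finset.mem_range.mp hj; omega
        rw [he]
  
lemma TT_Fc_eq_Qs : ∀ m, TT Fc m = Qs m := by
  intro m
  induction m with
  | zero => rw [TT_zero, Qs_zero]
  | succ m ih =>
    have hE := TT_Fc_sum (m+1)
    rw [Finset.sum_range_succ, ← TT_Fc_sum m] at hE
    have hrec : (1 - (PowerSeries.X : R) ^ (2*(m+1))) * TT Fc (m+1) = TT Fc m := by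
      linear_combination hE
    have hne : (1 - (PowerSeries.X : R) ^ (2*(m+1))) ≠ 0 := by
      intro h
      have := congrArg (constantCoeff (R := ℚ)) h
      rw [cc_one_sub (2*(m+1)) (by omega), map_zero] at this
      norm_num at this
    refine mul_left_cancel₀ hne ?_
    rw [hrec, Qs_rec, ih]

/-- Generic multiplicity product. -/
def facGen (h : ℕ → R) (s : Multiset ℕ) : R := ∏ r ∈ s.toFinset, (h r) ^ (s.count r)

lemma facMinus_eq (s : Multiset ℕ) :
    facMinus s = facGen (fun r => (1 - (PowerSeries.X : R) ^ r)⁻¹) s := rfl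

lemma facPlus_eq (s : Multiset ℕ) :
    facPlus s = facGen (fun r => (1 + (PowerSeries.X : R) ^ r)⁻¹) s := rfl

lemma facGen_subset (h : ℕ → R) (s : Multiset ℕ) {t : Finset ℕ} (hsub : s.toFinset ⊆ t) :
    facGen h s = ∏ r ∈ t, (h r) ^ (s.count r) := by
  refine Finset.prod_subset hsub fun r _ hr => ?_
  rw [Multiset.count_eq_zero_of_notMem (fun hmem => hr (Multiset.mem_toFinset.mpr hmem)), pow_zero]

lemma facGen_add (h : ℕ → R) (ρ μ : Multiset ℕ) :
    facGen h (ρ + μ) = facGen h μ * facGen h ρ := by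
  classical
  have ht : (ρ + μ).toFinset = ρ.toFinset ∪ μ.toFinset := Multiset.toFinset_add ρ μ
  rw [facGen, facGen_subset h μ (t := (ρ + μ).toFinset) (by rw [ht]; exact Finset.subset_union_right),
    facGen_subset h ρ (t := (ρ + μ).toFinset) (by rw [ht]; exact Finset.subset_union_left),
    ← Finset.prod_mul_distrib]
  refine Finset.prod_congr rfl fun r _ => ?_
  rw [Multiset.count_add, pow_add, mul_comm]

lemma choose_factor (c : ℚ) (p q : ℕ) :
    (((p+q).choose q : ℚ)) / ((p+q).factorial * c^(p+q))
      = ((q.factorial * c^q)⁻¹) * ((p.factorial * c^p)⁻¹) := by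
  by_cases hc : c = 0
  · subst hc
    rcases Nat.eq_zero_or_pos (p + q) with h | h
    · have hp : p = 0 := by omega
      have hq : q = 0 := by omega
      subst hp; subst hq; norm_num
    · rcases Nat.eq_zero_or_pos p with hp | hp
      · have hq : 0 < q := by omega
        rw [zero_pow (by omega : p + q ≠ 0), zero_pow (by omega : q ≠ 0)]
        simp
      · rw [zero_pow (by omega : p + q ≠ 0), zero_pow (by omega : p ≠ 0)]
        simp
  · have h1 : ((p+q).choose q * p.factorial * q.factorial : ℕ) = ((p+q).factorial : ℕ) :=
      Nat.add_choose_mul_factorial_mul_factorial p q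
    have h2 : ((p+q).factorial : ℚ) = ((p+q).choose q : ℚ) * p.factorial * q.factorial := by
      rw [← h1]; push_cast; ring
    have hfp : (p.factorial : ℚ) ≠ 0 := Nat.cast_ne_zero.mpr (Nat.factorial_ne_zero p)
    have hfq : (q.factorial : ℚ) ≠ 0 := Nat.cast_ne_zero.mpr (Nat.factorial_ne_zero q)
    have hch : ((p+q).choose q : ℚ) ≠ 0 :=
      Nat.cast_ne_zero.mpr (Nat.choose_pos (Nat.le_add_left q p)).ne'
    rw [h2, pow_add]
    field_simp

lemma binom_v_split (ρ μ : Multiset ℕ) :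
    ((binomOf (ρ + μ) μ : ℚ)) / ((vOf (ρ + μ) : ℚ))
      = ((vOf μ : ℚ))⁻¹ * ((vOf ρ : ℚ))⁻¹ := by
  classical
  set t : Finset ℕ := (ρ + μ).toFinset with htdef
  have ht : t = ρ.toFinset ∪ μ.toFinset := Multiset.toFinset_add ρ μ
  have htμ : μ.toFinset ⊆ t := by rw [ht]; exact Finset.subset_union_right
  have htρ : ρ.toFinset ⊆ t := by rw [ht]; exact Finset.subset_union_left
  have hbin : ((binomOf (ρ + μ) μ : ℕ) : ℚ)
      = ∏ r ∈ t, ((((ρ + μ).count r).choose (μ.count r) : ℕ) : ℚ) := by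
    rw [binomOf, Nat.cast_prod]
    refine Finset.prod_subset htμ fun r _ hr => ?_
    rw [Multiset.count_eq_zero_of_notMem (fun hmem => hr (Multiset.mem_toFinset.mpr hmem)),
      Nat.choose_zero_right, Nat.cast_one]
  have hv : ((vOf (ρ + μ) : ℕ) : ℚ)
      = ∏ r ∈ t, ((((ρ + μ).count r).factorial * (2*r)^((ρ + μ).count r) : ℕ) : ℚ) := by
    rw [vOf, Nat.cast_prod]
  have hvgen : ∀ (s : Multiset ℕ), s.toFinset ⊆ t → ((vOf s : ℕ) : ℚ)⁻¹
      = ∏ r ∈ t, (((s.count r).factorial * (2*r)^(s.count r) : ℕ) : ℚ)⁻¹ := by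
    intro s hs
    rw [vOf, Nat.cast_prod, ← Finset.prod_inv_distrib]
    refine Finset.prod_subset hs fun r _ hr => ?_
    rw [Multiset.count_eq_zero_of_notMem (fun hmem => hr (Multiset.mem_toFinset.mpr hmem))]
    norm_num
  rw [hbin, hv, hvgen μ htμ, hvgen ρ htρ, ← Finset.prod_div_distrib, ← Finset.prod_mul_distrib]
  refine Finset.prod_congr rfl fun r _ => ?_
  have hcount : (ρ + μ).count r = ρ.count r + μ.count r := Multiset.count_add r ρ μ
  rw [hcount]
  push_cast
  exact choose_factor (2*(r:ℚ)) (ρ.count r) (μ.count r)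

lemma termM_vOf (h : ℕ → R) (ρ : Multiset ℕ) :
    PowerSeries.C (R := ℚ) ((vOf ρ : ℚ))⁻¹ * facGen h ρ
      = termM (fun r => PowerSeries.C (R := ℚ) (2*(r:ℚ))⁻¹ * h r) ρ := by
  rw [termM]
  have hstep : ∀ r ∈ ρ.toFinset,
      PowerSeries.C (R := ℚ) (((ρ.count r).factorial : ℚ))⁻¹ *
          (PowerSeries.C (R := ℚ) (2*(r:ℚ))⁻¹ * h r) ^ ρ.count r
      = PowerSeries.C (R := ℚ) ((((ρ.count r).factorial * (2*r)^(ρ.count r) : ℕ) : ℚ))⁻¹ *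
          (h r) ^ ρ.count r := by
    intro r _
    rw [mul_pow, ← map_pow, ← mul_assoc, ← map_mul]
    congr 2
    push_cast
    rw [inv_pow, ← mul_inv]
  rw [Finset.prod_congr rfl hstep, Finset.prod_mul_distrib, ← map_prod]
  congr 2
  rw [vOf, Nat.cast_prod, ← Finset.prod_inv_distrib]

lemma B_gen (h : ℕ → R) (μ : Multiset ℕ) (hμ : ∀ i ∈ μ, 0 < i) (k : ℕ) :
    ∑ ν : Nat.Partition k,
        PowerSeries.C (R := ℚ) ((binomOf ν.parts μ : ℚ) / (vOf ν.parts : ℚ)) * facGen h ν.parts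
      = if μ.sum ≤ k then
          (PowerSeries.C (R := ℚ) ((vOf μ : ℚ))⁻¹ * facGen h μ) *
            TT (fun r => PowerSeries.C (R := ℚ) (2*(r:ℚ))⁻¹ * h r) (k - μ.sum)
        else 0 := by
  classical
  have hφ : ∀ s : Multiset ℕ, ¬ μ ≤ s →
      PowerSeries.C (R := ℚ) ((binomOf s μ : ℚ) / (vOf s : ℚ)) * facGen h s = 0 := by
    intro s hs
    have : binomOf s μ = 0 := by
      rw [Multiset.le_iff_count] at hs
      push_neg at hs
      obtain ⟨a, ha⟩ := hs
      have hmem : a ∈ μ.toFinset := Multiset.mem_toFinset.mpr (Multiset.count_pos.mp (by omega))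
      exact Finset.prod_eq_zero hmem (Nat.choose_eq_zero_of_lt (by omega))
    rw [this, Nat.cast_zero, zero_div, map_zero, zero_mul]
  by_cases hk : μ.sum ≤ k
  · rw [if_pos hk]
    rw [sum_partition_restrict μ hμ hk _ hφ]
    rw [TT, Finset.mul_sum]
    refine Finset.sum_congr rfl fun ρ _ => ?_
    rw [binom_v_split, facGen_add, map_mul]
    rw [← termM_vOf]
    ring
  · rw [if_neg hk]
    refine Finset.sum_eq_zero fun ν _ => ?_
    refine hφ _ fun hle => hk ?_
    have hsum := congrArg Multiset.sum (tsub_add_cancel_of_le hle)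
    rw [Multiset.sum_add, ν.parts_sum] at hsum
    omega

lemma B_minus (μ : Multiset ℕ) (hμ : ∀ i ∈ μ, 0 < i) (k : ℕ) :
    ∑ ν : Nat.Partition k,
        PowerSeries.C (R := ℚ) ((binomOf ν.parts μ : ℚ) / (vOf ν.parts : ℚ)) * facMinus ν.parts
      = if μ.sum ≤ k then
          (PowerSeries.C (R := ℚ) ((vOf μ : ℚ))⁻¹ * facMinus μ) * TT fm (k - μ.sum) else 0 := by
  simp only [facMinus_eq]
  exact B_gen (fun r => (1 - (PowerSeries.X : R) ^ r)⁻¹) μ hμ k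

lemma B_plus (μ : Multiset ℕ) (hμ : ∀ i ∈ μ, 0 < i) (k : ℕ) :
    ∑ ν : Nat.Partition k,
        PowerSeries.C (R := ℚ) ((binomOf ν.parts μ : ℚ) / (vOf ν.parts : ℚ)) * facPlus ν.parts
      = if μ.sum ≤ k then
          (PowerSeries.C (R := ℚ) ((vOf μ : ℚ))⁻¹ * facPlus μ) * TT fp (k - μ.sum) else 0 := by
  simp only [facPlus_eq]
  exact B_gen (fun r => (1 + (PowerSeries.X : R) ^ r)⁻¹) μ hμ k

lemma gSer_eq {A B : ℕ} (mu : Nat.Partition A) (lam : Nat.Partition B) (n : ℕ) :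
    gSer mu.parts lam.parts n
      = if A + B ≤ n then
          ((PowerSeries.C (R := ℚ) ((vOf mu.parts : ℚ))⁻¹ * facMinus mu.parts) *
            (PowerSeries.C (R := ℚ) ((vOf lam.parts : ℚ))⁻¹ * facPlus lam.parts)) * Qs (n - A - B)
        else 0 := by
  classical
  have hmupos : ∀ i ∈ mu.parts, 0 < i := fun i hi => mu.parts_pos hi
  have hlampos : ∀ i ∈ lam.parts, 0 < i := fun i hi => lam.parts_pos hi
  set Cm : R := PowerSeries.C (R := ℚ) ((vOf mu.parts : ℚ))⁻¹ * facMinus mu.parts with hCm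
  set Cp : R := PowerSeries.C (R := ℚ) ((vOf lam.parts : ℚ))⁻¹ * facPlus lam.parts with hCp
  have hsplit : gSer mu.parts lam.parts n
      = ∑ k ∈ Finset.range (n+1),
          (∑ nu : Nat.Partition k,
            PowerSeries.C (R := ℚ) ((binomOf nu.parts mu.parts : ℚ) / (vOf nu.parts : ℚ)) *
              facMinus nu.parts) *
          (∑ ka : Nat.Partition (n-k),
            PowerSeries.C (R := ℚ) ((binomOf ka.parts lam.parts : ℚ) / (vOf ka.parts : ℚ)) *
              facPlus ka.parts) := by
    rw [gSer]
    refine Finset.sum_congr rfl fun k _ => ?_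
    rw [Finset.sum_mul_sum]
    refine Finset.sum_congr rfl fun nu _ => Finset.sum_congr rfl fun ka _ => ?_
    rw [mul_div_mul_comm, map_mul]
    ring
  rw [hsplit]
  have hrw : ∀ k ∈ Finset.range (n+1),
      (∑ nu : Nat.Partition k,
        PowerSeries.C (R := ℚ) ((binomOf nu.parts mu.parts : ℚ) / (vOf nu.parts : ℚ)) *
          facMinus nu.parts) *
      (∑ ka : Nat.Partition (n-k),
        PowerSeries.C (R := ℚ) ((binomOf ka.parts lam.parts : ℚ) / (vOf ka.parts : ℚ)) *
          facPlus ka.parts)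
      = if A ≤ k ∧ B ≤ n - k then
          (Cm * TT fm (k - A)) * (Cp * TT fp (n - k - B)) else 0 := by
    intro k _
    rw [B_minus mu.parts hmupos k, B_plus lam.parts hlampos (n-k), mu.parts_sum, lam.parts_sum]
    rw [ite_mul, zero_mul, mul_ite, mul_zero, ← ite_and]
  rw [Finset.sum_congr rfl hrw]
  by_cases hn : A + B ≤ n
  · rw [if_pos hn]
    rw [← Finset.sum_filter]
    have hfil : (Finset.range (n+1)).filter (fun k => A ≤ k ∧ B ≤ n - k)
        = Finset.Icc A (n - B) := by
      ext k
      simp only [Finset.mem_filter, Finset.mem_range, Finset.mem_Icc]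
      omega
    rw [hfil, ← Finset.Ico_add_one_right_eq_Icc, Finset.sum_Ico_eq_sum_range]
    have hcard : n - B + 1 - A = (n - A - B) + 1 := by omega
    rw [hcard]
    have hterm : ∀ i ∈ Finset.range ((n - A - B) + 1),
        (Cm * TT fm (A + i - A)) * (Cp * TT fp (n - (A + i) - B))
          = (Cm * Cp) * (TT fm i * TT fp ((n - A - B) - i)) := by
      intro i _
      have e1 : A + i - A = i := by omega
      have e2 : n - (A + i) - B = (n - A - B) - i := by omega
      rw [e1, e2, mul_mul_mul_comm]
    rw [Finset.sum_congr rfl hterm, ← Finset.mul_sum, TT_conv]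
    rw [TT_congr key1 (n - A - B), TT_Fc_eq_Qs]
  · rw [if_neg hn]
    refine Finset.sum_eq_zero fun k hk => ?_
    have hk' : k ≤ n := by
      have := Finset.mem_range.mp hk; omega
    rw [if_neg (by omega)]

end

end TwistedBettiAux

open TwistedBettiAux in
/-- **Theorem 1.10**: the double generating function, in `ℚ[[z]][[u]]`, for the twisted
Betti numbers of the spaces of maximal tori in type B/C:
`Σ_{n≥0} g_n(μ,λ) u^n = (1/(v_μ v_λ)) ∏_r (u^r/(1-z^r))^{n_r(μ)}
  ∏_r (u^r/(1+z^r))^{n_r(λ)} · Σ_{m≥0} u^m/∏_{i=1}^m (1-z^{2i})`,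
the last factor being the expansion of `∏_{r≥1} (1-uz^{2r-2})^{-1}`. -/
theorem double_genfun_twisted_betti (A B : ℕ) (mu : Nat.Partition A)
    (lam : Nat.Partition B) :
    (PowerSeries.mk fun n : ℕ => gSer mu.parts lam.parts n
      : PowerSeries (PowerSeries ℚ))
    =
    PowerSeries.C (R := PowerSeries ℚ)
        (PowerSeries.C (R := ℚ) (1 / ((vOf mu.parts : ℚ) * (vOf lam.parts : ℚ)))) *
      (∏ r ∈ mu.parts.toFinset,
        (PowerSeries.C (R := PowerSeries ℚ) ((1 - (PowerSeries.X : PowerSeries ℚ) ^ r)⁻¹) *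
          (PowerSeries.X : PowerSeries (PowerSeries ℚ)) ^ r) ^ (mu.parts.count r)) *
      (∏ r ∈ lam.parts.toFinset,
        (PowerSeries.C (R := PowerSeries ℚ) ((1 + (PowerSeries.X : PowerSeries ℚ) ^ r)⁻¹) *
          (PowerSeries.X : PowerSeries (PowerSeries ℚ)) ^ r) ^ (lam.parts.count r)) *
      (PowerSeries.mk fun m : ℕ =>
        (∏ i ∈ Finset.Icc 1 m, (1 - (PowerSeries.X : PowerSeries ℚ) ^ (2 * i)))⁻¹) := by
  classical
  have hsum : ∀ (s : Multiset ℕ), ∑ r ∈ s.toFinset, r * s.count r = s.sum := by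
    intro s
    rw [multiset_sum_eq_sum_count]
    exact Finset.sum_congr rfl fun r _ => (mul_comm _ _)
  have hpr : ∀ (s : Multiset ℕ) (a : ℕ → PowerSeries ℚ),
      ∏ r ∈ s.toFinset,
          (PowerSeries.C (R := PowerSeries ℚ) (a r) *
            (PowerSeries.X : PowerSeries (PowerSeries ℚ)) ^ r) ^ (s.count r)
        = PowerSeries.C (R := PowerSeries ℚ) (∏ r ∈ s.toFinset, (a r) ^ (s.count r)) *
            (PowerSeries.X : PowerSeries (PowerSeries ℚ)) ^ (s.sum) := by
    intro s a
    have h1 : ∀ r ∈ s.toFinset,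
        (PowerSeries.C (R := PowerSeries ℚ) (a r) *
            (PowerSeries.X : PowerSeries (PowerSeries ℚ)) ^ r) ^ (s.count r)
          = PowerSeries.C (R := PowerSeries ℚ) ((a r) ^ (s.count r)) *
              (PowerSeries.X : PowerSeries (PowerSeries ℚ)) ^ (r * s.count r) := by
      intro r _
      rw [mul_pow, ← map_pow, ← pow_mul]
    rw [Finset.prod_congr rfl h1, Finset.prod_mul_distrib, ← map_prod,
      Finset.prod_pow_eq_pow_sum, hsum s]
  set c0 : PowerSeries ℚ :=
    PowerSeries.C (R := ℚ) (1 / ((vOf mu.parts : ℚ) * (vOf lam.parts : ℚ))) *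
      facMinus mu.parts * facPlus lam.parts with hc0def
  have hc0 : c0 = (PowerSeries.C (R := ℚ) ((vOf mu.parts : ℚ))⁻¹ * facMinus mu.parts) *
      (PowerSeries.C (R := ℚ) ((vOf lam.parts : ℚ))⁻¹ * facPlus lam.parts) := by
    rw [hc0def, one_div, mul_inv, map_mul]
    ring
  have step1 : (PowerSeries.mk fun n : ℕ => gSer mu.parts lam.parts n
        : PowerSeries (PowerSeries ℚ))
      = PowerSeries.mk (fun n => if A + B ≤ n then c0 * Qs (n - (A + B)) else 0) := by
    refine congrArg PowerSeries.mk (funext fun n => ?_)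
    rw [gSer_eq mu lam n, hc0, Nat.sub_sub]
  have step2 : (PowerSeries.mk (fun n => if A + B ≤ n then c0 * Qs (n - (A + B)) else 0)
        : PowerSeries (PowerSeries ℚ))
      = PowerSeries.C (R := PowerSeries ℚ) c0 *
          (PowerSeries.mk Qs * (PowerSeries.X : PowerSeries (PowerSeries ℚ)) ^ (A + B)) := by
    ext n
    rw [PowerSeries.coeff_mk, PowerSeries.coeff_C_mul, PowerSeries.coeff_mul_X_pow',
      PowerSeries.coeff_mk, mul_ite, mul_zero]
  rw [step1, step2]
  rw [hpr mu.parts _, hpr lam.parts _, mu.parts_sum, lam.parts_sum]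
  have hfm : (∏ r ∈ mu.parts.toFinset,
      ((1 - (PowerSeries.X : PowerSeries ℚ) ^ r)⁻¹) ^ (mu.parts.count r)) = facMinus mu.parts := rfl
  have hfp : (∏ r ∈ lam.parts.toFinset,
      ((1 + (PowerSeries.X : PowerSeries ℚ) ^ r)⁻¹) ^ (lam.parts.count r)) = facPlus lam.parts := rfl
  have hq : (PowerSeries.mk fun m : ℕ =>
      (∏ i ∈ Finset.Icc 1 m, (1 - (PowerSeries.X : PowerSeries ℚ) ^ (2 * i)))⁻¹)
      = PowerSeries.mk Qs := rfl
  rw [hfm, hfp, hq, hc0def, map_mul, map_mul, pow_add]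
  ring
end

section
/- Fix a double partition (μ,λ) with N := |μ|+|λ| ≥ 1, and let β_i ∈ ℚ be the coefficient of z^i in the power series (1/(v_μ v_λ)) · ∏_{r≥1} (1-z^r)^{-n_r(μ)} · ∏_{r≥1} (1+z^r)^{-n_r(λ)} ∈ ℚ[[z]]. Set M := lcm{2k : 1 ≤ k ≤ N}. Then the sequence (β_i) is quasipolynomial of quasiperiod M and degree at most N-1: there exist polynomials p_0, p_1, …, p_{M-1} ∈ ℚ[t], each of degree at most N-1, such that β_i = p_{i mod M}(i) for all i ≥ 0. -/
open Finset PowerSeries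

/-- the stable twisted Betti number `β_i`: the coefficient of `z^i` in
`(1/(v_μ v_λ)) ∏_{r≥1} (1-z^r)^{-n_r(μ)} ∏_{r≥1} (1+z^r)^{-n_r(λ)} ∈ ℚ[[z]]`. -/
noncomputable def stableBeta (muP lamP : Multiset ℕ) (i : ℕ) : ℚ :=
  PowerSeries.coeff i
    (PowerSeries.C (1 / ((vOf muP : ℚ) * (vOf lamP : ℚ))) * facMinus muP * facPlus lamP)

/- ### Auxiliary material -/

private lemma smul_one_withbot (n : ℕ) : n • (1 : WithBot ℕ) = (n : WithBot ℕ) := by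
  induction n with
  | zero => simp
  | succ k ih => rw [succ_nsmul, ih]; push_cast; rfl

private lemma qp_one_sub_dvd {r M : ℕ} (h : r ∣ M) :
    (1 - Polynomial.X ^ r : Polynomial ℚ) ∣ (1 - Polynomial.X ^ M) := by
  obtain ⟨s, rfl⟩ := h
  simpa [pow_mul] using one_sub_dvd_one_sub_pow (Polynomial.X ^ r : Polynomial ℚ) s

private lemma qp_one_add_dvd {r M : ℕ} (h : 2 * r ∣ M) :
    (1 + Polynomial.X ^ r : Polynomial ℚ) ∣ (1 - Polynomial.X ^ M) := by
  refine dvd_trans ⟨1 - Polynomial.X ^ r, ?_⟩ (qp_one_sub_dvd h)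
  rw [two_mul, pow_add]
  ring

/-- the geometric series `∑_k z^{Mk}`. -/
private noncomputable def geomS (M : ℕ) : PowerSeries ℚ :=
  PowerSeries.mk fun n => if M ∣ n then 1 else 0

private lemma coeff_geomS (M n : ℕ) :
    PowerSeries.coeff n (geomS M) = if M ∣ n then 1 else 0 := by
  rw [geomS, PowerSeries.coeff_mk]

private lemma geomS_mul_eq_one {M : ℕ} (hM : 0 < M) :
    (1 - (PowerSeries.X : PowerSeries ℚ) ^ M) * geomS M = 1 := by
  ext n
  rw [sub_mul, one_mul, map_sub, PowerSeries.coeff_X_pow_mul' (geomS M) M n]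
  rw [coeff_geomS, PowerSeries.coeff_one]
  by_cases h1 : M ∣ n
  · rcases Nat.eq_zero_or_pos n with rfl | hn
    · rw [if_pos h1, if_neg (by omega), if_pos rfl]; ring
    · have hMn : M ≤ n := Nat.le_of_dvd hn h1
      rw [if_pos h1, if_pos hMn, coeff_geomS,
        if_pos (Nat.dvd_sub h1 dvd_rfl), if_neg (by omega)]
      ring
  · have hn0 : n ≠ 0 := by rintro rfl; exact h1 (dvd_zero M)
    rw [if_neg h1, if_neg hn0]
    by_cases hMn : M ≤ n
    · have hnd : ¬ M ∣ n - M := by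
        intro hd
        exact h1 (by have := Nat.dvd_add hd (dvd_refl M); rwa [Nat.sub_add_cancel hMn] at this)
      rw [if_pos hMn, coeff_geomS, if_neg hnd, sub_zero]
    · rw [if_neg hMn, sub_zero]

private lemma sum_multiples {M : ℕ} (hM : 0 < M) (m : ℕ) (f : ℕ → ℚ) :
    (∑ k ∈ Finset.range (M * m + 1), if M ∣ k then f (k / M) else 0)
      = ∑ j ∈ Finset.range (m + 1), f j := by
  rw [← Finset.sum_filter]
  refine Finset.sum_nbij' (fun k => k / M) (fun j => M * j) ?_ ?_ ?_ ?_ ?_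
  · intro k hk
    simp only [Finset.mem_filter, Finset.mem_range] at hk
    obtain ⟨hk1, t, rfl⟩ := hk
    simp only [Finset.mem_range]
    rw [Nat.mul_div_cancel_left _ hM]
    have h : M * t ≤ M * m := by omega
    exact Nat.lt_succ_of_le (Nat.le_of_mul_le_mul_left h hM)
  · intro j hj
    simp only [Finset.mem_range] at hj
    simp only [Finset.mem_filter, Finset.mem_range]
    refine ⟨?_, Dvd.intro j rfl⟩
    have : M * j ≤ M * m := Nat.mul_le_mul_left M (by omega)
    omega
  · intro k hk
    simp only [Finset.mem_filter] at hk
    exact Nat.mul_div_cancel' hk.2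
  · intro j _
    exact Nat.mul_div_cancel_left _ hM
  · intro k _
    rfl

private lemma coeff_geomS_pow {M : ℕ} (hM : 0 < M) (N n : ℕ) :
    PowerSeries.coeff n (geomS M ^ (N + 1)) =
      if M ∣ n then ((n / M + N).choose N : ℚ) else 0 := by
  induction N generalizing n with
  | zero =>
    rw [pow_one, coeff_geomS]
    simp
  | succ N ih =>
    rw [pow_succ, PowerSeries.coeff_mul,
      Finset.Nat.sum_antidiagonal_eq_sum_range_succ (fun a b =>
        PowerSeries.coeff a (geomS M ^ (N + 1)) * PowerSeries.coeff b (geomS M))]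
    by_cases hdvd : M ∣ n
    · obtain ⟨m, rfl⟩ := hdvd
      have key : ∀ k ∈ Finset.range (M * m + 1),
          PowerSeries.coeff k (geomS M ^ (N + 1)) *
            PowerSeries.coeff (M * m - k) (geomS M)
          = if M ∣ k then ((fun j => (((j + N).choose N : ℕ) : ℚ)) (k / M)) else 0 := by
        intro k _
        rw [ih, coeff_geomS]
        by_cases h : M ∣ k
        · have hd2 : M ∣ M * m - k := Nat.dvd_sub (Dvd.intro m rfl) h
          rw [if_pos h, if_pos hd2, mul_one]
        · rw [if_neg h, zero_mul]
      rw [Finset.sum_congr rfl key, sum_multiples hM m (fun j => (((j + N).choose N : ℕ) : ℚ))]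
      rw [if_pos (Dvd.intro m rfl), Nat.mul_div_cancel_left _ hM]
      rw [← Nat.cast_sum, Nat.sum_range_add_choose m N]
      norm_num [Nat.add_assoc]
    · rw [if_neg hdvd]
      refine Finset.sum_eq_zero fun k hk => ?_
      have hk' : k ≤ n := Nat.lt_succ_iff.mp (Finset.mem_range.mp hk)
      by_cases h : M ∣ k
      · have hnd : ¬ M ∣ n - k := by
          intro hd
          exact hdvd (by have := Nat.dvd_add h hd; rwa [Nat.add_sub_cancel' hk'] at this)
        rw [coeff_geomS, if_neg hnd, mul_zero]
      · rw [ih, if_neg h, zero_mul]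

private lemma mcard_le_sum (s : Multiset ℕ) :
    (∀ x ∈ s, 1 ≤ x) → Multiset.card s ≤ s.sum := by
  refine Multiset.induction_on s (by simp) ?_
  intro a t ih h
  simp only [Multiset.card_cons, Multiset.sum_cons]
  have h1 := h a (Multiset.mem_cons_self a t)
  have h2 := ih fun x hx => h x (Multiset.mem_cons_of_mem hx)
  omega

private lemma prod_eq_ascFactorial (t : ℕ) : ∀ m : ℕ,
    (∏ k ∈ Finset.range m, (t + k + 1)) = (t + 1).ascFactorial m
  | 0 => by simp
  | m + 1 => by
    rw [Finset.prod_range_succ, prod_eq_ascFactorial t m, Nat.ascFactorial_succ]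
    ring

/-- `facMinus` is inverse to the corresponding polynomial product. -/
private lemma facMinus_mul (nu : Multiset ℕ) (hpos : ∀ r ∈ nu, 0 < r) :
    facMinus nu * (((nu.map fun r => (1 - Polynomial.X ^ r : Polynomial ℚ)).prod :
      Polynomial ℚ) : PowerSeries ℚ) = 1 := by
  rw [Finset.prod_multiset_map_count]
  rw [← Polynomial.coeToPowerSeries.ringHom_apply, map_prod]
  have hco : ∀ r ∈ nu.toFinset,
      Polynomial.coeToPowerSeries.ringHom ((1 - Polynomial.X ^ r : Polynomial ℚ) ^ nu.count r)
        = ((1 - PowerSeries.X ^ r : PowerSeries ℚ)) ^ nu.count r := by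
    intro r _
    rw [map_pow, map_sub, map_one, map_pow, Polynomial.coeToPowerSeries.ringHom_apply,
      Polynomial.coe_X]
  rw [Finset.prod_congr rfl hco, facMinus, ← Finset.prod_mul_distrib]
  refine Finset.prod_eq_one fun r hr => ?_
  rw [← mul_pow, PowerSeries.inv_mul_cancel _ ?_, one_pow]
  have hr0 : 0 < r := hpos r (Multiset.mem_toFinset.mp hr)
  simp [zero_pow hr0.ne']

private lemma facPlus_mul (nu : Multiset ℕ) (hpos : ∀ r ∈ nu, 0 < r) :
    facPlus nu * (((nu.map fun r => (1 + Polynomial.X ^ r : Polynomial ℚ)).prod :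
      Polynomial ℚ) : PowerSeries ℚ) = 1 := by
  rw [Finset.prod_multiset_map_count]
  rw [← Polynomial.coeToPowerSeries.ringHom_apply, map_prod]
  have hco : ∀ r ∈ nu.toFinset,
      Polynomial.coeToPowerSeries.ringHom ((1 + Polynomial.X ^ r : Polynomial ℚ) ^ nu.count r)
        = ((1 + PowerSeries.X ^ r : PowerSeries ℚ)) ^ nu.count r := by
    intro r _
    rw [map_pow, map_add, map_one, map_pow, Polynomial.coeToPowerSeries.ringHom_apply,
      Polynomial.coe_X]
  rw [Finset.prod_congr rfl hco, facPlus, ← Finset.prod_mul_distrib]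
  refine Finset.prod_eq_one fun r hr => ?_
  rw [← mul_pow, PowerSeries.inv_mul_cancel _ ?_, one_pow]
  have hr0 : 0 < r := hpos r (Multiset.mem_toFinset.mp hr)
  simp [zero_pow hr0.ne']

private lemma mprod_dvd (nu : Multiset ℕ) (g : ℕ → Polynomial ℚ) (D : Polynomial ℚ)
    (h : ∀ r ∈ nu, g r ∣ D) : (nu.map g).prod ∣ D ^ (Multiset.card nu) := by
  have := Multiset.prod_dvd_prod_of_dvd g (fun _ => D) h
  rwa [Multiset.map_const', Multiset.prod_replicate] at this

/-- **Corollary 1.14 (stable Betti numbers are quasipolynomial)**: with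
`N = |μ| + |λ| ≥ 1` and `M = lcm{2k : 1 ≤ k ≤ N}`, there are polynomials
`p_0, …, p_{M-1} ∈ ℚ[t]` of degree at most `N - 1` such that
`β_i = p_{i mod M}(i)` for all `i ≥ 0`. -/
theorem stable_betti_quasipolynomial (A B : ℕ) (mu : Nat.Partition A)
    (lam : Nat.Partition B) (hN : 1 ≤ A + B) :
    ∃ p : ℕ → Polynomial ℚ,
      (∀ j < (Finset.Icc 1 (A + B)).lcm (fun k => 2 * k),
        (p j).degree ≤ (A + B - 1 : ℕ)) ∧
      (∀ i : ℕ,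
        stableBeta mu.parts lam.parts i
          = (p (i % (Finset.Icc 1 (A + B)).lcm (fun k => 2 * k))).eval (i : ℚ)) := by
  classical
  set N := A + B with hNdef
  set M := (Finset.Icc 1 N).lcm (fun k => 2 * k) with hMdef
  obtain ⟨N', hNN⟩ : ∃ N', N = N' + 1 := ⟨N - 1, by omega⟩
  -- M is positive
  have hM : 0 < M := by
    rw [Nat.pos_iff_ne_zero, hMdef, Ne, Finset.lcm_eq_zero_iff]
    intro h
    obtain ⟨k, hk, h2⟩ := h
    simp only [Finset.coe_Icc, Set.mem_Icc, Finset.mem_Icc] at hk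
    omega
  -- facts about parts
  have hmu_mem : ∀ r ∈ mu.parts, 1 ≤ r ∧ r ≤ N := by
    intro r hr
    refine ⟨mu.parts_pos hr, ?_⟩
    have := Multiset.single_le_sum (fun x _ => Nat.zero_le x) r hr
    rw [mu.parts_sum] at this
    omega
  have hlam_mem : ∀ r ∈ lam.parts, 1 ≤ r ∧ r ≤ N := by
    intro r hr
    refine ⟨lam.parts_pos hr, ?_⟩
    have := Multiset.single_le_sum (fun x _ => Nat.zero_le x) r hr
    rw [lam.parts_sum] at this
    omega
  have h2rM : ∀ r, 1 ≤ r → r ≤ N → 2 * r ∣ M := by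
    intro r h1 h2
    rw [hMdef]
    exact Finset.dvd_lcm (Finset.mem_Icc.mpr ⟨h1, h2⟩)
  -- polynomial setup
  set Pm : Polynomial ℚ := (mu.parts.map fun r => 1 - Polynomial.X ^ r).prod with hPm
  set Pp : Polynomial ℚ := (lam.parts.map fun r => 1 + Polynomial.X ^ r).prod with hPp
  have hdvd : Pm * Pp ∣ (1 - Polynomial.X ^ M) ^ N := by
    have h1 : Pm ∣ (1 - Polynomial.X ^ M) ^ (Multiset.card mu.parts) :=
      mprod_dvd _ _ _ fun r hr =>
        qp_one_sub_dvd (dvd_trans (dvd_mul_left r 2)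
          (h2rM r (hmu_mem r hr).1 (hmu_mem r hr).2))
    have h2 : Pp ∣ (1 - Polynomial.X ^ M) ^ (Multiset.card lam.parts) :=
      mprod_dvd _ _ _ fun r hr =>
        qp_one_add_dvd (h2rM r (hlam_mem r hr).1 (hlam_mem r hr).2)
    have hcard : Multiset.card mu.parts + Multiset.card lam.parts ≤ N := by
      have c1 : Multiset.card mu.parts ≤ A := by
        have := mcard_le_sum mu.parts fun x hx => (hmu_mem x hx).1
        rwa [mu.parts_sum] at this
      have c2 : Multiset.card lam.parts ≤ B := by
        have := mcard_le_sum lam.parts fun x hx => (hlam_mem x hx).1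
        rwa [lam.parts_sum] at this
      omega
    calc Pm * Pp ∣ (1 - Polynomial.X ^ M) ^ (Multiset.card mu.parts) *
          (1 - Polynomial.X ^ M) ^ (Multiset.card lam.parts) := mul_dvd_mul h1 h2
      _ = (1 - Polynomial.X ^ M) ^ (Multiset.card mu.parts + Multiset.card lam.parts) :=
          (pow_add _ _ _).symm
      _ ∣ (1 - Polynomial.X ^ M) ^ N := pow_dvd_pow _ hcard
  obtain ⟨Q, hQ⟩ := hdvd
  -- nonvanishing and degrees
  have hD0 : (1 - Polynomial.X ^ M : Polynomial ℚ) ≠ 0 := by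
    intro h
    have hh : ((1 : Polynomial ℚ) - Polynomial.X ^ M).coeff 0 = 1 := by
      rw [Polynomial.coeff_sub, Polynomial.coeff_one_zero, Polynomial.coeff_X_pow,
        if_neg hM.ne, sub_zero]
    rw [h] at hh
    simp at hh
  have hDp0 : ((1 - Polynomial.X ^ M : Polynomial ℚ)) ^ N ≠ 0 := pow_ne_zero _ hD0
  have hPmPp0 : Pm * Pp ≠ 0 := fun h => hDp0 (by rw [hQ, h, zero_mul])
  have hQ0 : Q ≠ 0 := fun h => hDp0 (by rw [hQ, h, mul_zero])
  have hdegD : (1 - Polynomial.X ^ M : Polynomial ℚ).natDegree = M := by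
    rw [show (1 - Polynomial.X ^ M : Polynomial ℚ) =
        -(Polynomial.X ^ M - Polynomial.C 1) by simp [neg_sub]]
    rw [Polynomial.natDegree_neg, Polynomial.natDegree_X_pow_sub_C]
  have hdegPmPp : 1 ≤ (Pm * Pp).natDegree := by
    have hfac : ∃ f : Polynomial ℚ, f ∣ Pm * Pp ∧ 1 ≤ f.natDegree := by
      rcases Nat.eq_zero_or_pos A with hA | hA
      · have hB : 1 ≤ B := by omega
        have hne : lam.parts ≠ 0 := by
          intro h
          have hs := lam.parts_sum
          rw [h] at hs
          simp at hs
          omega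
        obtain ⟨r, hr⟩ := Multiset.exists_mem_of_ne_zero hne
        refine ⟨1 + Polynomial.X ^ r, Dvd.dvd.mul_left ?_ Pm, ?_⟩
        · exact Multiset.dvd_prod (Multiset.mem_map_of_mem _ hr)
        · rw [add_comm, show Polynomial.X ^ r + (1 : Polynomial ℚ)
            = Polynomial.X ^ r + Polynomial.C 1 by simp]
          rw [Polynomial.natDegree_X_pow_add_C]
          exact (hlam_mem r hr).1
      · have hne : mu.parts ≠ 0 := by
          intro h
          have hs := mu.parts_sum
          rw [h] at hs
          simp at hs
          omega
        obtain ⟨r, hr⟩ := Multiset.exists_mem_of_ne_zero hne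
        refine ⟨1 - Polynomial.X ^ r, Dvd.dvd.mul_right ?_ Pp, ?_⟩
        · exact Multiset.dvd_prod (Multiset.mem_map_of_mem _ hr)
        · rw [show (1 - Polynomial.X ^ r : Polynomial ℚ) =
            -(Polynomial.X ^ r - Polynomial.C 1) by simp [neg_sub]]
          rw [Polynomial.natDegree_neg, Polynomial.natDegree_X_pow_sub_C]
          exact (hmu_mem r hr).1
    obtain ⟨f, hf1, hf2⟩ := hfac
    exact le_trans hf2 (Polynomial.natDegree_le_of_dvd hf1 hPmPp0)
  have hdegQ : Q.natDegree < N * M := by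
    have hdeg : N * M = (Pm * Pp).natDegree + Q.natDegree := by
      have hh := congrArg Polynomial.natDegree hQ
      rwa [Polynomial.natDegree_mul hPmPp0 hQ0, Polynomial.natDegree_pow, hdegD] at hh
    omega
  -- power series identities
  set S : PowerSeries ℚ := geomS M with hSdef
  have hFm : facMinus mu.parts * ((Pm : Polynomial ℚ) : PowerSeries ℚ) = 1 :=
    facMinus_mul mu.parts fun r hr => (hmu_mem r hr).1
  have hFp : facPlus lam.parts * ((Pp : Polynomial ℚ) : PowerSeries ℚ) = 1 :=
    facPlus_mul lam.parts fun r hr => (hlam_mem r hr).1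
  have hcoeQ : ((1 : PowerSeries ℚ) - PowerSeries.X ^ M) ^ N
      = ((Pm : Polynomial ℚ) : PowerSeries ℚ) * ((Pp : Polynomial ℚ) : PowerSeries ℚ)
        * ((Q : Polynomial ℚ) : PowerSeries ℚ) := by
    have hh := congrArg (fun p : Polynomial ℚ => Polynomial.coeToPowerSeries.ringHom p) hQ
    simp only [map_pow, map_sub, map_one, map_mul,
      Polynomial.coeToPowerSeries.ringHom_apply, Polynomial.coe_X] at hh
    simpa only [Polynomial.coeToPowerSeries.ringHom_apply] using hh
  have hSN1 : ((1 : PowerSeries ℚ) - PowerSeries.X ^ M) ^ N * S ^ N = 1 := by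
    rw [← mul_pow, hSdef, geomS_mul_eq_one hM, one_pow]
  have key : facMinus mu.parts * facPlus lam.parts
      = ((Q : Polynomial ℚ) : PowerSeries ℚ) * S ^ N := by
    calc facMinus mu.parts * facPlus lam.parts
        = facMinus mu.parts * facPlus lam.parts
            * (((1 : PowerSeries ℚ) - PowerSeries.X ^ M) ^ N * S ^ N) := by
          rw [hSN1, mul_one]
      _ = (facMinus mu.parts * ((Pm : Polynomial ℚ) : PowerSeries ℚ))
            * ((facPlus lam.parts * ((Pp : Polynomial ℚ) : PowerSeries ℚ))
            * (((Q : Polynomial ℚ) : PowerSeries ℚ) * S ^ N)) := by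
          rw [hcoeQ]; ring
      _ = ((Q : Polynomial ℚ) : PowerSeries ℚ) * S ^ N := by
          rw [hFm, hFp, one_mul, one_mul]
  set c : ℚ := 1 / ((vOf mu.parts : ℚ) * (vOf lam.parts : ℚ)) with hc
  -- the polynomials
  refine ⟨fun j => Polynomial.C c *
    ∑ d ∈ (Finset.range (N * M)).filter (fun d => d % M = j),
      Polynomial.C (Q.coeff d) * (Polynomial.C ((N'.factorial : ℚ)⁻¹) *
        ∏ k ∈ Finset.range N', (Polynomial.C ((M : ℚ))⁻¹ *
          (Polynomial.X - Polynomial.C (d : ℚ)) + Polynomial.C ((k : ℚ) + 1))), ?_, ?_⟩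
  · -- degree bound
    intro j _
    dsimp only
    have hfactor : ∀ d k : ℕ, (Polynomial.C ((M : ℚ))⁻¹ *
          (Polynomial.X - Polynomial.C (d : ℚ)) + Polynomial.C ((k : ℚ) + 1)).degree
        ≤ (1 : WithBot ℕ) := by
      intro d k
      refine le_trans (Polynomial.degree_add_le _ _) (max_le ?_ ?_)
      · refine le_trans (Polynomial.degree_mul_le _ _) ?_
        rw [Polynomial.degree_X_sub_C]
        calc (Polynomial.C ((M : ℚ))⁻¹).degree + 1 ≤ 0 + 1 :=
              add_le_add_left Polynomial.degree_C_le 1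
          _ = 1 := zero_add 1
      · exact le_trans Polynomial.degree_C_le (by norm_num)
    have hB : ∀ d : ℕ, (Polynomial.C (Q.coeff d) * (Polynomial.C ((N'.factorial : ℚ)⁻¹) *
        ∏ k ∈ Finset.range N', (Polynomial.C ((M : ℚ))⁻¹ *
          (Polynomial.X - Polynomial.C (d : ℚ)) + Polynomial.C ((k : ℚ) + 1)))).degree
        ≤ (N' : WithBot ℕ) := by
      intro d
      have hprod : (∏ k ∈ Finset.range N', (Polynomial.C ((M : ℚ))⁻¹ *
          (Polynomial.X - Polynomial.C (d : ℚ)) + Polynomial.C ((k : ℚ) + 1))).degree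
          ≤ (N' : WithBot ℕ) := by
        refine le_trans (Polynomial.degree_prod_le _ _)
          (le_trans (Finset.sum_le_sum (fun k _ => hfactor d k)) ?_)
        rw [Finset.sum_const, Finset.card_range, smul_one_withbot]
      calc (Polynomial.C (Q.coeff d) * (Polynomial.C ((N'.factorial : ℚ)⁻¹) *
            ∏ k ∈ Finset.range N', (Polynomial.C ((M : ℚ))⁻¹ *
              (Polynomial.X - Polynomial.C (d : ℚ)) + Polynomial.C ((k : ℚ) + 1)))).degree
          ≤ (Polynomial.C (Q.coeff d)).degree + ((Polynomial.C ((N'.factorial : ℚ)⁻¹)).degree +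
            (∏ k ∈ Finset.range N', (Polynomial.C ((M : ℚ))⁻¹ *
              (Polynomial.X - Polynomial.C (d : ℚ)) + Polynomial.C ((k : ℚ) + 1))).degree) :=
            le_trans (Polynomial.degree_mul_le _ _)
              (add_le_add_right (Polynomial.degree_mul_le _ _) _)
        _ ≤ 0 + (0 + (N' : WithBot ℕ)) :=
            add_le_add Polynomial.degree_C_le (add_le_add Polynomial.degree_C_le hprod)
        _ = (N' : WithBot ℕ) := by rw [zero_add, zero_add]
    rw [show (N - 1 : ℕ) = N' by omega]
    calc (Polynomial.C c * ∑ d ∈ (Finset.range (N * M)).filter (fun d => d % M = j),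
          Polynomial.C (Q.coeff d) * (Polynomial.C ((N'.factorial : ℚ)⁻¹) *
            ∏ k ∈ Finset.range N', (Polynomial.C ((M : ℚ))⁻¹ *
              (Polynomial.X - Polynomial.C (d : ℚ)) + Polynomial.C ((k : ℚ) + 1)))).degree
        ≤ (Polynomial.C c).degree + (∑ d ∈ (Finset.range (N * M)).filter (fun d => d % M = j),
          Polynomial.C (Q.coeff d) * (Polynomial.C ((N'.factorial : ℚ)⁻¹) *
            ∏ k ∈ Finset.range N', (Polynomial.C ((M : ℚ))⁻¹ *
              (Polynomial.X - Polynomial.C (d : ℚ)) + Polynomial.C ((k : ℚ) + 1)))).degree :=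
          Polynomial.degree_mul_le _ _
      _ ≤ 0 + (N' : WithBot ℕ) := by
          refine add_le_add Polynomial.degree_C_le ?_
          refine le_trans (Polynomial.degree_sum_le _ _) ?_
          exact Finset.sup_le fun d _ => hB d
      _ = (N' : WithBot ℕ) := zero_add _
  · -- the evaluation identity
    intro i
    dsimp only
    set g : ℕ → ℚ := fun d => Q.coeff d *
      (if d ≤ i ∧ M ∣ (i - d) then (((i - d) / M + N').choose N' : ℚ) else 0) with hg
    have hzero1 : ∀ d, i + 1 ≤ d → g d = 0 := by
      intro d hd
      simp only [hg]
      rw [if_neg (by omega), mul_zero]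
    have hzero2 : ∀ d, N * M ≤ d → g d = 0 := by
      intro d hd
      simp only [hg]
      rw [Polynomial.coeff_eq_zero_of_natDegree_lt (lt_of_lt_of_le hdegQ hd), zero_mul]
    -- LHS
    have hlhs : stableBeta mu.parts lam.parts i
        = c * PowerSeries.coeff i (((Q : Polynomial ℚ) : PowerSeries ℚ) * S ^ N) := by
      rw [stableBeta, mul_assoc, key, ← hc, PowerSeries.coeff_C_mul]
    have hcoeffsum : PowerSeries.coeff i (((Q : Polynomial ℚ) : PowerSeries ℚ) * S ^ N)
        = ∑ d ∈ Finset.range (N * M), g d := by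
      rw [PowerSeries.coeff_mul,
        Finset.Nat.sum_antidiagonal_eq_sum_range_succ (fun a b =>
          PowerSeries.coeff a ((Q : Polynomial ℚ) : PowerSeries ℚ) *
            PowerSeries.coeff b (S ^ N))]
      have hterm : ∀ d ∈ Finset.range (i + 1),
          PowerSeries.coeff d ((Q : Polynomial ℚ) : PowerSeries ℚ) *
            PowerSeries.coeff (i - d) (S ^ N) = g d := by
        intro d hd
        have hdi : d ≤ i := Nat.lt_succ_iff.mp (Finset.mem_range.mp hd)
        rw [Polynomial.coeff_coe, hSdef, hNN, coeff_geomS_pow hM N' (i - d)]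
        simp only [hg]
        by_cases h : M ∣ i - d
        · rw [if_pos h, if_pos ⟨hdi, h⟩]
        · rw [if_neg h, if_neg (by tauto)]
      rw [Finset.sum_congr rfl hterm]
      have e1 : (∑ d ∈ Finset.range (i + 1), g d)
          = ∑ d ∈ Finset.range (i + 1 + N * M), g d := by
        refine Finset.sum_subset (Finset.range_subset_range.mpr (by omega)) ?_
        intro d _ hd
        simp only [Finset.mem_range] at hd
        exact hzero1 d (by omega)
      have e2 : (∑ d ∈ Finset.range (N * M), g d)
          = ∑ d ∈ Finset.range (i + 1 + N * M), g d := by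
        refine Finset.sum_subset (Finset.range_subset_range.mpr (by omega)) ?_
        intro d _ hd
        simp only [Finset.mem_range] at hd
        exact hzero2 d (by omega)
      rw [e1, ← e2]
    -- RHS evaluation
    have hMQ0 : (M : ℚ) ≠ 0 := Nat.cast_ne_zero.mpr hM.ne'
    have hfact0 : (N'.factorial : ℚ) ≠ 0 := Nat.cast_ne_zero.mpr N'.factorial_ne_zero
    rw [hlhs, hcoeffsum]
    rw [Polynomial.eval_mul, Polynomial.eval_C, Polynomial.eval_finset_sum]
    congr 1
    rw [Finset.sum_filter]
    refine Finset.sum_congr rfl fun d hd => ?_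
    have hdNM : d < N * M := Finset.mem_range.mp hd
    simp only [Polynomial.eval_mul, Polynomial.eval_C, Polynomial.eval_prod,
      Polynomial.eval_add, Polynomial.eval_sub, Polynomial.eval_X]
    by_cases hmod : d % M = i % M
    · rw [if_pos hmod]
      by_cases hdi : d ≤ i
      · have hdvd2 : M ∣ i - d := (Nat.modEq_iff_dvd' hdi).mp hmod
        obtain ⟨t, ht⟩ := hdvd2
        have hdiv : (i - d) / M = t := by rw [ht, Nat.mul_div_cancel_left _ hM]
        have hcast : (i : ℚ) - (d : ℚ) = (M : ℚ) * (t : ℚ) := by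
          have hc2 : ((i - d : ℕ) : ℚ) = (i : ℚ) - (d : ℚ) := Nat.cast_sub hdi
          rw [← hc2, ht]
          push_cast
          ring
        have hprodval : (∏ k ∈ Finset.range N',
            (((M : ℚ))⁻¹ * ((i : ℚ) - (d : ℚ)) + ((k : ℚ) + 1)))
            = (((t + 1).ascFactorial N' : ℕ) : ℚ) := by
          rw [← prod_eq_ascFactorial t N', Nat.cast_prod]
          refine Finset.prod_congr rfl fun k _ => ?_
          rw [hcast, ← mul_assoc, inv_mul_cancel₀ hMQ0, one_mul]
          push_cast
          ring
        simp only [hg]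
        rw [if_pos ⟨hdi, ⟨t, ht⟩⟩, hdiv, hprodval,
          Nat.ascFactorial_eq_factorial_mul_choose, Nat.cast_mul,
          ← mul_assoc ((N'.factorial : ℚ))⁻¹, inv_mul_cancel₀ hfact0, one_mul]
      · -- d > i : both sides vanish
        have hid : i < d := not_le.mp hdi
        have hdvd2 : M ∣ d - i := (Nat.modEq_iff_dvd' (le_of_lt hid)).mp hmod.symm
        obtain ⟨s, hs⟩ := hdvd2
        have hs1 : 1 ≤ s := by
          rcases Nat.eq_zero_or_pos s with rfl | h
          · omega
          · omega
        have hsN : s ≤ N' := by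
          have h1 : M * s < N * M := by rw [← hs]; omega
          rw [Nat.mul_comm N M] at h1
          have h2 := Nat.lt_of_mul_lt_mul_left h1
          omega
        have hprod0 : (∏ k ∈ Finset.range N',
            (((M : ℚ))⁻¹ * ((i : ℚ) - (d : ℚ)) + ((k : ℚ) + 1))) = 0 := by
          refine Finset.prod_eq_zero (Finset.mem_range.mpr (show s - 1 < N' by omega)) ?_
          have hcast : (i : ℚ) - (d : ℚ) = -((M : ℚ) * (s : ℚ)) := by
            have hc2 : ((d - i : ℕ) : ℚ) = (d : ℚ) - (i : ℚ) := Nat.cast_sub (le_of_lt hid)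
            rw [show (i : ℚ) - (d : ℚ) = -((d : ℚ) - (i : ℚ)) by ring, ← hc2, hs]
            push_cast
            ring
          rw [hcast]
          have hscast : ((s - 1 : ℕ) : ℚ) = (s : ℚ) - 1 := by
            rw [Nat.cast_sub hs1, Nat.cast_one]
          rw [hscast]
          field_simp
          ring
        simp only [hg]
        rw [if_neg (by tauto), mul_zero, hprod0, mul_zero, mul_zero]
    · rw [if_neg hmod]
      simp only [hg]
      rw [if_neg, mul_zero]
      rintro ⟨h1, h2⟩
      exact hmod ((Nat.modEq_iff_dvd' h1).mpr h2)
end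

section
/- Let n ≥ 1 and let a_1, …, a_n, b_1, …, b_n be nonnegative integers with Σ_{r=1}^n r(a_r + b_r) = n (the signed cycle type of an element of the hyperoctahedral group B_n, with a_r positive r-cycles and b_r negative r-cycles). In ℚ[[t]] set A := ∏_{k=1}^n (1-t^{2k}) / ∏_{r=1}^n (1-t^r)^{a_r} (1+t^r)^{b_r} and Q := ∏_{k=1}^∞ (1-t^{2k}) / ∏_{r=1}^n (1-t^r)^{a_r} (1+t^r)^{b_r}, where the infinite product ∏_{k=1}^∞ (1-t^{2k}) converges in the t-adic topology. Then the coefficients of t^i in A and in Q agree for all 0 ≤ i ≤ 2n+1, while the coefficient of t^{2n+2} in A - Q equals 1; in particular the agreement range i ≤ 2n+1 is sharp. -/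
open Finset PowerSeries

/-- The infinite product `∏_{k=1}^∞ (1-t^{2k}) ∈ ℚ[[t]]` (its `t`-adic limit): each
coefficient of `t^i` stabilizes in the partial products, since the factors with
`k > i` only affect degrees `≥ 2(i+1) > i`; so we may define the coefficient of `t^i`
to be that of the partial product `∏_{k=1}^{i} (1-t^{2k})`. -/
noncomputable def infProdEven : PowerSeries ℚ :=
  PowerSeries.mk fun i =>
    PowerSeries.coeff (R := ℚ) i
      (∏ k ∈ Finset.Icc 1 i, (1 - (PowerSeries.X : PowerSeries ℚ) ^ (2 * k)))

lemma stab (m₁ : ℕ) : ∀ m₂, m₁ ≤ m₂ → ∀ i, i < 2 * (m₁ + 1) →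
    PowerSeries.coeff (R := ℚ) i (∏ k ∈ Finset.Icc 1 m₂, (1 - (PowerSeries.X : PowerSeries ℚ) ^ (2 * k)))
      = PowerSeries.coeff (R := ℚ) i (∏ k ∈ Finset.Icc 1 m₁, (1 - (PowerSeries.X : PowerSeries ℚ) ^ (2 * k))) := by
  intro m₂ hm
  induction m₂, hm using Nat.le_induction with
  | base => intro i _; rfl
  | succ m hm ih =>
      intro i hi
      rw [Finset.prod_Icc_succ_top (Nat.le_add_left 1 m), mul_sub, mul_one, map_sub,
        PowerSeries.coeff_mul_X_pow', if_neg, sub_zero, ih i hi]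
      omega

/-- **Theorem 1.7 and Remark 3.9 (sharpness)**: for a signed cycle type of an element of
`B_n` with `a_r` positive and `b_r` negative `r`-cycles (`Σ r(a_r+b_r) = n`), the series
`A = ∏_{k=1}^n (1-t^{2k}) / ∏_{r=1}^n (1-t^r)^{a_r}(1+t^r)^{b_r}` (the Poincaré-type
character series of the coinvariant algebra `R_n^*`) and
`Q = ∏_{k=1}^∞ (1-t^{2k}) / ∏_{r=1}^n (1-t^r)^{a_r}(1+t^r)^{b_r}` (the generating series
of the character polynomials `Q_i`) agree in all degrees `i ≤ 2n+1`, and the coefficient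
of `t^{2n+2}` in `A - Q` equals `1`; in particular the range `i ≤ 2n+1` is sharp. -/
theorem coinvariant_char_poly_range_sharp (n : ℕ) (hn : 1 ≤ n) (a b : ℕ → ℕ)
    (hab : ∑ r ∈ Finset.Icc 1 n, r * (a r + b r) = n) :
    (∀ i ≤ 2 * n + 1,
      PowerSeries.coeff (R := ℚ) i
        ((∏ k ∈ Finset.Icc 1 n, (1 - (PowerSeries.X : PowerSeries ℚ) ^ (2 * k))) *
          (∏ r ∈ Finset.Icc 1 n,
            (1 - (PowerSeries.X : PowerSeries ℚ) ^ r) ^ (a r) *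
              (1 + (PowerSeries.X : PowerSeries ℚ) ^ r) ^ (b r))⁻¹)
      = PowerSeries.coeff (R := ℚ) i
        (infProdEven *
          (∏ r ∈ Finset.Icc 1 n,
            (1 - (PowerSeries.X : PowerSeries ℚ) ^ r) ^ (a r) *
              (1 + (PowerSeries.X : PowerSeries ℚ) ^ r) ^ (b r))⁻¹))
    ∧
    PowerSeries.coeff (R := ℚ) (2 * n + 2)
      (((∏ k ∈ Finset.Icc 1 n, (1 - (PowerSeries.X : PowerSeries ℚ) ^ (2 * k))) *
          (∏ r ∈ Finset.Icc 1 n,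
            (1 - (PowerSeries.X : PowerSeries ℚ) ^ r) ^ (a r) *
              (1 + (PowerSeries.X : PowerSeries ℚ) ^ r) ^ (b r))⁻¹)
        - (infProdEven *
          (∏ r ∈ Finset.Icc 1 n,
            (1 - (PowerSeries.X : PowerSeries ℚ) ^ r) ^ (a r) *
              (1 + (PowerSeries.X : PowerSeries ℚ) ^ r) ^ (b r))⁻¹))
      = 1 := by
  set P : PowerSeries ℚ := ∏ k ∈ Finset.Icc 1 n, (1 - (PowerSeries.X : PowerSeries ℚ) ^ (2 * k)) with hP
  set D : PowerSeries ℚ := ∏ r ∈ Finset.Icc 1 n,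
      (1 - (PowerSeries.X : PowerSeries ℚ) ^ r) ^ (a r) *
        (1 + (PowerSeries.X : PowerSeries ℚ) ^ r) ^ (b r) with hD
  -- coefficients of infProdEven
  have hcoeff_le : ∀ i ≤ 2 * n + 1, PowerSeries.coeff (R := ℚ) i infProdEven = PowerSeries.coeff (R := ℚ) i P := by
    intro i hi
    rw [infProdEven, PowerSeries.coeff_mk]
    rcases le_total i n with h | h
    · exact (stab i n h i (by omega)).symm
    · exact stab n i h i (by omega)
  have hcoeff_top : PowerSeries.coeff (R := ℚ) (2 * n + 2) infProdEven
      = PowerSeries.coeff (R := ℚ) (2 * n + 2) P - 1 := by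
    rw [infProdEven, PowerSeries.coeff_mk]
    rw [stab (n + 1) (2 * n + 2) (by omega) (2 * n + 2) (by omega)]
    rw [Finset.prod_Icc_succ_top (Nat.le_add_left 1 n), mul_sub, mul_one, map_sub,
      PowerSeries.coeff_mul_X_pow', if_pos (by omega)]
    have : 2 * n + 2 - 2 * (n + 1) = 0 := by omega
    rw [this]
    have hc0 : (PowerSeries.coeff (R := ℚ) 0) P = 1 := by
      rw [PowerSeries.coeff_zero_eq_constantCoeff_apply, hP, map_prod]
      rw [Finset.prod_eq_one]
      intro k hk
      simp only [map_sub, map_one, map_pow, PowerSeries.constantCoeff_X]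
      rw [zero_pow (by simp at hk; omega), sub_zero]
    rw [hc0]
  -- difference coefficients
  have hdiff : ∀ i ≤ 2 * n + 1,
      PowerSeries.coeff (R := ℚ) i (P - infProdEven) = 0 := by
    intro i hi
    rw [map_sub, hcoeff_le i hi, sub_self]
  have hdiff_top : PowerSeries.coeff (R := ℚ) (2 * n + 2) (P - infProdEven) = 1 := by
    rw [map_sub, hcoeff_top]; ring
  have hDc : PowerSeries.constantCoeff (R := ℚ) D = 1 := by
    rw [hD, map_prod, Finset.prod_eq_one]
    intro r hr
    have hr1 : 1 ≤ r := by simp at hr; omega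
    simp only [map_mul, map_pow, map_sub, map_add, map_one, PowerSeries.constantCoeff_X]
    rw [zero_pow (by omega), sub_zero, add_zero, one_pow, one_pow, one_mul]
  have hDinv : PowerSeries.constantCoeff (R := ℚ) D⁻¹ = 1 := by
    rw [PowerSeries.constantCoeff_inv, hDc, inv_one]
  constructor
  · intro i hi
    have : PowerSeries.coeff (R := ℚ) i ((P - infProdEven) * D⁻¹) = 0 := by
      rw [PowerSeries.coeff_mul]
      apply Finset.sum_eq_zero
      intro p hp
      rw [Finset.HasAntidiagonal.mem_antidiagonal] at hp
      rw [hdiff p.1 (by omega), zero_mul]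
    rw [sub_mul, map_sub, sub_eq_zero] at this
    exact this
  · have : PowerSeries.coeff (R := ℚ) (2 * n + 2) ((P - infProdEven) * D⁻¹) = 1 := by
      rw [PowerSeries.coeff_mul]
      rw [Finset.sum_eq_single (2 * n + 2, 0)]
      · rw [hdiff_top, one_mul, PowerSeries.coeff_zero_eq_constantCoeff, hDinv]
      · intro p hp hne
        rw [Finset.HasAntidiagonal.mem_antidiagonal] at hp
        have : p.1 ≤ 2 * n + 1 := by
          rcases Nat.lt_or_ge p.1 (2 * n + 2) with h | h
          · omega
          · exfalso; apply hne; have : p.2 = 0 := by omega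
            have h1 : p.1 = 2 * n + 2 := by omega
            exact Prod.ext h1 this
        rw [hdiff p.1 this, zero_mul]
      · intro h; exfalso; exact h (by simp [Finset.mem_antidiagonal])
    rw [sub_mul, map_sub] at this
    exact this
end

section
/- Let q and u be real numbers with q > 1 and |u| < q. Then the series Σ_{i≥1} u^i/(i(q^i - 1)) converges absolutely, the infinite product ∏_{r≥1} (1 - u q^{-r})^{-1} converges, and exp( Σ_{i≥1} u^i/(i(q^i - 1)) ) = ∏_{r≥1} (1 - u q^{-r})^{-1}. -/
open Finset

set_option maxHeartbeats 1000000

/-- **Lemma 3.3(i)**: for real `q > 1` and `|u| < q`, the series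
`Σ_{i≥1} u^i/(i(q^i-1))` converges absolutely, the infinite product
`∏_{r≥1} (1-u q^{-r})^{-1}` converges, and
`exp(Σ_{i≥1} u^i/(i(q^i-1))) = ∏_{r≥1} (1-u q^{-r})^{-1}`. -/
theorem exp_sum_eq_prod (q u : ℝ) (hq : 1 < q) (hu : |u| < q) :
    Summable (fun i : ℕ => |u ^ (i + 1) / ((i + 1) * (q ^ (i + 1) - 1))|) ∧
    Multipliable (fun r : ℕ => (1 - u / q ^ (r + 1))⁻¹) ∧
    Real.exp (∑' i : ℕ, u ^ (i + 1) / ((i + 1) * (q ^ (i + 1) - 1)))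
      = ∏' r : ℕ, (1 - u / q ^ (r + 1))⁻¹ := by
  have hq0 : (0 : ℝ) < q := lt_trans one_pos hq
  have hqpow : ∀ n : ℕ, (0 : ℝ) < q ^ n := fun n => pow_pos hq0 n
  have hqle : ∀ r : ℕ, q ≤ q ^ (r + 1) := fun r => by
    calc q = q ^ 1 := (pow_one q).symm
    _ ≤ q ^ (r + 1) := pow_le_pow_right₀ hq.le (Nat.succ_le_succ (Nat.zero_le r))
  have hx : ∀ r : ℕ, |u / q ^ (r + 1)| < 1 := fun r => by
    rw [abs_div, abs_of_pos (hqpow (r + 1)), div_lt_one (hqpow (r + 1))]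
    exact lt_of_lt_of_le hu (hqle r)
  -- The double family
  set F : ℕ × ℕ → ℝ := fun p => (u / q ^ (p.2 + 1)) ^ (p.1 + 1) / (p.1 + 1) with hF_def
  have habs : ∀ p : ℕ × ℕ, |F p| ≤ (|u| / q) ^ (p.1 + 1) * (1 / q) ^ p.2 := by
    rintro ⟨i, r⟩
    dsimp only
    have h1 : |F (i, r)| ≤ |u / q ^ (r + 1)| ^ (i + 1) := by
      rw [hF_def]
      simp only
      rw [abs_div, abs_pow, abs_of_pos (show (0:ℝ) < (i:ℝ) + 1 by positivity)]
      exact div_le_self (by positivity) (by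
        have := Nat.cast_nonneg (α := ℝ) i; linarith)
    refine h1.trans ?_
    rw [abs_div, abs_of_pos (hqpow (r + 1))]
    rw [div_pow, div_pow, div_pow, one_pow, div_mul_div_comm, mul_one]
    apply div_le_div_of_nonneg_left (by positivity) (by positivity)
    rw [← pow_add, ← pow_mul]
    exact pow_le_pow_right₀ hq.le (by nlinarith [Nat.zero_le (r * i)])
  have hgeo1 : Summable (fun i : ℕ => (|u| / q) ^ (i + 1)) := by
    have : |u| / q < 1 := (div_lt_one hq0).2 hu
    simpa [pow_succ'] using (summable_geometric_of_lt_one (by positivity) this).mul_left (|u| / q)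
  have hgeo2 : Summable (fun r : ℕ => (1 / q) ^ r) :=
    summable_geometric_of_lt_one (by positivity) (by rw [div_lt_one hq0]; exact hq)
  have hFabs : Summable fun p : ℕ × ℕ => |F p| := by
    refine Summable.of_nonneg_of_le (fun p => abs_nonneg _) habs ?_
    exact hgeo1.mul_of_nonneg hgeo2 (fun i => by positivity) (fun r => by positivity)
  have hF : Summable F := hFabs.of_abs
  -- row sums: geometric series over r
  have h1 : ∀ i : ℕ, HasSum (fun r => F (i, r)) (u ^ (i + 1) / ((i + 1) * (q ^ (i + 1) - 1))) := by
    intro i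
    have hq1 : (1 : ℝ) < q ^ (i + 1) := lt_of_lt_of_le hq (hqle i)
    have hne : q ^ (i + 1) - 1 ≠ 0 := by linarith
    have hqi : (q : ℝ) ^ (i + 1) ≠ 0 := by positivity
    have hip : ((i : ℝ) + 1) ≠ 0 := by positivity
    set x : ℝ := 1 / q ^ (i + 1) with hx_def
    set c : ℝ := u ^ (i + 1) / (i + 1) * x with hc_def
    have hxq : |x| < 1 := by
      rw [hx_def, abs_of_pos (by positivity), div_lt_one (hqpow (i + 1))]
      exact hq1
    have hg := (hasSum_geometric_of_abs_lt_one hxq).mul_left c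
    have heq : (fun r : ℕ => F (i, r)) = fun r => c * x ^ r := by
      funext r
      have key : (q ^ (r + 1)) ^ (i + 1) = q ^ (i + 1) * (q ^ (i + 1)) ^ r := by
        rw [← pow_mul, ← pow_mul, ← pow_add]; congr 1; ring
      rw [hF_def]
      simp only [hc_def, hx_def, div_pow, one_pow, key]
      field_simp
      try ring
      try tauto
    have hval : u ^ (i + 1) / ((i + 1) * (q ^ (i + 1) - 1)) = c * (1 - x)⁻¹ := by
      have h1x : (1 : ℝ) - x = (q ^ (i + 1) - 1) / q ^ (i + 1) := by
        rw [hx_def]; field_simp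
      rw [h1x, hc_def, hx_def]
      field_simp
    rw [heq, hval]
    exact hg
  -- column sums: log series over i
  have h2 : ∀ r : ℕ, HasSum (fun i => F (i, r)) (-Real.log (1 - u / q ^ (r + 1))) := fun r =>
    Real.hasSum_pow_div_log_of_abs_lt_one (hx r)
  -- total sum
  set A : ℝ := ∑' p : ℕ × ℕ, F p with hA
  have hS1 : HasSum (fun i : ℕ => u ^ (i + 1) / ((i + 1) * (q ^ (i + 1) - 1))) A :=
    hF.hasSum.prod_fiberwise h1
  have hswap : HasSum (fun p : ℕ × ℕ => F (p.2, p.1)) A := by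
    have := (Equiv.prodComm ℕ ℕ).hasSum_iff (f := F) (a := A)
    exact this.2 hF.hasSum
  have hS2 : HasSum (fun r : ℕ => -Real.log (1 - u / q ^ (r + 1))) A :=
    hswap.prod_fiberwise h2
  -- positivity of 1 - u/q^(r+1)
  have hpos : ∀ r : ℕ, (0 : ℝ) < 1 - u / q ^ (r + 1) := fun r => by
    have := hx r
    have := abs_lt.1 this
    linarith [this.2]
  -- exp of sum is product of exps
  have hp : HasProd (fun r : ℕ => (1 - u / q ^ (r + 1))⁻¹) (Real.exp A) := by
    have hh : HasProd (fun r : ℕ => Real.exp (-Real.log (1 - u / q ^ (r + 1)))) (Real.exp A) := by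
      have : Filter.Tendsto
          (fun s : Finset ℕ => Real.exp (∑ r ∈ s, -Real.log (1 - u / q ^ (r + 1))))
          Filter.atTop (nhds (Real.exp A)) := (Real.continuous_exp.tendsto A).comp hS2
      refine this.congr fun s => ?_
      rw [Real.exp_sum]
    refine HasProd.congr_fun hh fun r => ?_
    rw [Real.exp_neg, Real.exp_log (hpos r)]
  -- first conjunct: absolute summability
  have habs_sum : Summable (fun i : ℕ => |u ^ (i + 1) / ((i + 1) * (q ^ (i + 1) - 1))|) := by
    have hfiber : Summable fun i : ℕ => ∑' r : ℕ, |F (i, r)| :=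
      ((summable_prod_of_nonneg (fun p => abs_nonneg (F p))).1 hFabs).2
    refine Summable.of_nonneg_of_le (fun i => abs_nonneg _) (fun i => ?_) hfiber
    have := (h1 i).tsum_eq
    rw [← this]
    simpa using norm_tsum_le_tsum_norm (f := fun r => F (i, r)) (hFabs.prod_factor i)
  refine ⟨habs_sum, hp.multipliable, ?_⟩
  rw [hS1.tsum_eq, hp.tprod_eq]
end
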